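/- arXiv:2510.18259 — 4 statements merged into one kernel-verified Lean document; each statement's English description precedes it below -/
import Mathlib

section
/- (Initial study of S_t.) For every 1 ≤ t ≤ N, the partial sums of bias iterates satisfy S_t ⪯ (I − γ T̃^q) ∘ S_{t−1} + γ² M_B^q ∘ S_N + B_0 in the PSD order. -/
open MeasureTheory Matrix Finset

noncomputable section

/-- Entrywise expectation of a matrix-valued random variable. -/
def mex {Ω : Type*} [MeasurableSpace Ω] (μ : Measure Ω) {m n : Type*}
    (A : Ω → Matrix m n ℝ) : Matrix m n ℝ :=
  Matrix.of fun i j => ∫ ω, A ω i j ∂μ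

/-- Entrywise expectation of a vector-valued random variable. -/
def vex {Ω : Type*} [MeasurableSpace Ω] (μ : Measure Ω) {n : Type*}
    (u : Ω → n → ℝ) : n → ℝ :=
  fun i => ∫ ω, u ω i ∂μ

/-- Loewner (positive semidefinite) order on real matrices: `loew A B ↔ A ⪯ B`. -/
def loew {n : Type*} [Fintype n] (A B : Matrix n n ℝ) : Prop :=
  (B - A).PosSemidef

lemma psd_smul_aux {n : Type*} [Fintype n] {c : ℝ} (hc : 0 ≤ c)
    {M : Matrix n n ℝ} (hM : M.PosSemidef) : (c • M).PosSemidef := by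
  refine Matrix.PosSemidef.of_dotProduct_mulVec_nonneg ?_ fun x => ?_
  · unfold Matrix.IsHermitian
    rw [conjTranspose_smul, hM.1.eq]
    simp
  · rw [Matrix.smul_mulVec, dotProduct_smul, smul_eq_mul]
    exact mul_nonneg hc (hM.dotProduct_mulVec_nonneg x)

lemma psd_sum_aux {n : Type*} [Fintype n] {ι : Type*} (s : Finset ι)
    (f : ι → Matrix n n ℝ) (h : ∀ i ∈ s, (f i).PosSemidef) :
    (∑ i ∈ s, f i).PosSemidef := by
  classical
  induction s using Finset.induction with
  | empty => simpa using Matrix.PosSemidef.zero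
  | insert _ _ hx ih =>
    rw [Finset.sum_insert hx]
    exact (h _ (Finset.mem_insert_self _ _)).add
      (ih fun i hi => h i (Finset.mem_insert_of_mem hi))

lemma mex_psd_aux {Ω : Type*} [MeasurableSpace Ω] (μ : Measure Ω) {d : ℕ}
    (M : Ω → Matrix (Fin d) (Fin d) ℝ) (hpsd : ∀ ω, (M ω).PosSemidef)
    (hint : ∀ i j, Integrable (fun ω => M ω i j) μ) :
    (mex μ M).PosSemidef := by
  refine Matrix.PosSemidef.of_dotProduct_mulVec_nonneg ?_ ?_
  · ext i j
    have hsym : (fun ω => M ω j i) = fun ω => M ω i j := funext fun ω => by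
      have := congrFun (congrFun (hpsd ω).1.eq i) j
      simpa [Matrix.conjTranspose_apply] using this
    simp only [Matrix.conjTranspose_apply, mex, Matrix.of_apply, star_trivial]
    rw [hsym]
  · intro x
    have h1 : ∫ ω, (∑ i, ∑ j, star x i * (M ω i j * x j)) ∂μ
        = ∑ i, ∑ j, star x i * ((∫ ω, M ω i j ∂μ) * x j) := by
      rw [integral_finset_sum _ (fun i _ => integrable_finset_sum _
        (fun j _ => ((hint i j).mul_const _).const_mul _))]
      refine Finset.sum_congr rfl fun i _ => ?_
      rw [integral_finset_sum _ (fun j _ => ((hint i j).mul_const _).const_mul _)]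
      refine Finset.sum_congr rfl fun j _ => ?_
      rw [MeasureTheory.integral_const_mul, MeasureTheory.integral_mul_const]
    have h2 : star x ⬝ᵥ (mex μ M) *ᵥ x
        = ∑ i, ∑ j, star x i * ((∫ ω, M ω i j ∂μ) * x j) := by
      simp [dotProduct, Matrix.mulVec, mex, Finset.mul_sum, mul_assoc]
    have h3 : ∀ ω, star x ⬝ᵥ (M ω) *ᵥ x
        = ∑ i, ∑ j, star x i * (M ω i j * x j) := fun ω => by
      simp [dotProduct, Matrix.mulVec, Finset.mul_sum, mul_assoc]
    rw [h2, ← h1]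
    exact integral_nonneg fun ω => (h3 ω) ▸ (hpsd ω).dotProduct_mulVec_nonneg x

theorem initial_study_St
    (d N : ℕ) (hN : 0 < N)
    (γ : ℝ) (hγ : 0 < γ)
    -- the randomness of one quantized batch; S = (1/B) X^{qT} X^q
    (Ωs : Type) [MeasurableSpace Ωs] (ν : Measure Ωs) [IsProbabilityMeasure ν]
    (S : Ωs → Matrix (Fin d) (Fin d) ℝ)
    (hSpsd : ∀ ω, (S ω).PosSemidef)
    (Hq : Matrix (Fin d) (Fin d) ℝ) (hHqpd : Hq.PosDef)
    (hSmean : mex ν S = Hq)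
    -- γ is small enough that I − γH^q ⪰ 0
    (hcontr : ((1 : Matrix (Fin d) (Fin d) ℝ) - γ • Hq).PosSemidef)
    -- entrywise integrability of the operator integrands
    (hIntM : ∀ A : Matrix (Fin d) (Fin d) ℝ, ∀ i j : Fin d,
      Integrable (fun ω => (S ω * A * S ω) i j) ν)
    (hIntT : ∀ A : Matrix (Fin d) (Fin d) ℝ, ∀ i j : Fin d,
      Integrable (fun ω =>
        (((1 : Matrix (Fin d) (Fin d) ℝ) - γ • S ω) * A *
          ((1 : Matrix (Fin d) (Fin d) ℝ) - γ • S ω)) i j) ν)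
    -- bias iterates: B_t = (I − γT_B^q)^t ∘ B₀
    (B0 : Matrix (Fin d) (Fin d) ℝ) (hB0psd : B0.PosSemidef)
    (Bseq : ℕ → Matrix (Fin d) (Fin d) ℝ)
    (hBseq0 : Bseq 0 = B0)
    (hBseqStep : ∀ t : ℕ, Bseq (t + 1) =
      mex ν (fun ω => ((1 : Matrix (Fin d) (Fin d) ℝ) - γ • S ω) * Bseq t *
        ((1 : Matrix (Fin d) (Fin d) ℝ) - γ • S ω)))
    (t : ℕ) (ht1 : 1 ≤ t) (htN : t ≤ N) :
    loew (∑ k ∈ Finset.range t, Bseq k)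
      (((1 : Matrix (Fin d) (Fin d) ℝ) - γ • Hq) * (∑ k ∈ Finset.range (t - 1), Bseq k) *
          ((1 : Matrix (Fin d) (Fin d) ℝ) - γ • Hq) +
        γ ^ 2 • mex ν (fun ω => S ω * (∑ k ∈ Finset.range N, Bseq k) * S ω) +
        B0) := by
  classical
  set P : Matrix (Fin d) (Fin d) ℝ := 1 - γ • Hq with hPdef
  -- the general conjugation expansion
  have hexp : ∀ X A : Matrix (Fin d) (Fin d) ℝ,
      ((1 : Matrix (Fin d) (Fin d) ℝ) - γ • X) * A * (1 - γ • X)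
        = A - γ • (X * A) - γ • (A * X) + γ ^ 2 • (X * A * X) := by
    intro X A
    simp only [sub_mul, mul_sub, one_mul, mul_one, smul_mul_assoc, mul_smul_comm,
      smul_sub, smul_smul, pow_two]
    module
  -- integrability of entries of S * S
  have hS2 : ∀ i j : Fin d, Integrable (fun ω => (S ω * S ω) i j) ν := by
    intro i j
    simpa using hIntM 1 i j
  -- integrability of entries of S
  have hSint : ∀ i j : Fin d, Integrable (fun ω => S ω i j) ν := by
    intro i j
    have hid : ∀ ω, S ω i j = (2 * γ)⁻¹ *
        ((1 : Matrix (Fin d) (Fin d) ℝ) i j + γ ^ 2 * ((S ω * S ω) i j)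
          - ((((1 : Matrix (Fin d) (Fin d) ℝ) - γ • S ω) * (1 : Matrix (Fin d) (Fin d) ℝ) *
              ((1 : Matrix (Fin d) (Fin d) ℝ) - γ • S ω)) i j)) := by
      intro ω
      rw [hexp (S ω) 1]
      simp only [Matrix.add_apply, Matrix.sub_apply, Matrix.smul_apply, Matrix.mul_one,
        Matrix.one_mul, smul_eq_mul]
      field_simp
      ring
    exact ((((integrable_const ((1 : Matrix (Fin d) (Fin d) ℝ) i j)).add
      ((hS2 i j).const_mul (γ ^ 2))).sub (hIntT 1 i j)).const_mul ((2 * γ)⁻¹)).congr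
      (Filter.Eventually.of_forall fun ω => (hid ω).symm)
  -- integrability of entries of S * A and A * S
  have hSA : ∀ (A : Matrix (Fin d) (Fin d) ℝ) (i j : Fin d),
      Integrable (fun ω => (S ω * A) i j) ν := by
    intro A i j
    simp only [Matrix.mul_apply]
    exact integrable_finset_sum _ fun l _ => (hSint i l).mul_const _
  have hAS : ∀ (A : Matrix (Fin d) (Fin d) ℝ) (i j : Fin d),
      Integrable (fun ω => (A * S ω) i j) ν := by
    intro A i j
    simp only [Matrix.mul_apply]
    exact integrable_finset_sum _ fun l _ => (hSint l j).const_mul _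
  -- mean of entries
  have hME : ∀ i j : Fin d, (∫ ω, S ω i j ∂ν) = Hq i j := fun i j =>
    congrFun (congrFun hSmean i) j
  have hMSA : ∀ (A : Matrix (Fin d) (Fin d) ℝ) (i j : Fin d),
      (∫ ω, (S ω * A) i j ∂ν) = (Hq * A) i j := by
    intro A i j
    simp only [Matrix.mul_apply]
    rw [integral_finset_sum _ fun l _ => (hSint i l).mul_const _]
    exact Finset.sum_congr rfl fun l _ => by
      rw [MeasureTheory.integral_mul_const, hME i l]
  have hMAS : ∀ (A : Matrix (Fin d) (Fin d) ℝ) (i j : Fin d),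
      (∫ ω, (A * S ω) i j ∂ν) = (A * Hq) i j := by
    intro A i j
    simp only [Matrix.mul_apply]
    rw [integral_finset_sum _ fun l _ => (hSint l j).const_mul _]
    exact Finset.sum_congr rfl fun l _ => by
      rw [MeasureTheory.integral_const_mul, hME l j]
  -- the key computation of the expected conjugation
  have key : ∀ A : Matrix (Fin d) (Fin d) ℝ,
      mex ν (fun ω => ((1 : Matrix (Fin d) (Fin d) ℝ) - γ • S ω) * A * (1 - γ • S ω))
        = P * A * P - γ ^ 2 • (Hq * A * Hq)
          + γ ^ 2 • mex ν (fun ω => S ω * A * S ω) := by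
    intro A
    ext i j
    have h1 : ∀ ω, (((1 : Matrix (Fin d) (Fin d) ℝ) - γ • S ω) * A * (1 - γ • S ω)) i j
        = A i j - γ * ((S ω * A) i j) - γ * ((A * S ω) i j)
          + γ ^ 2 * ((S ω * A * S ω) i j) := by
      intro ω
      rw [hexp (S ω) A]
      simp [Matrix.add_apply, Matrix.sub_apply, Matrix.smul_apply]
    have hRHS : (P * A * P - γ ^ 2 • (Hq * A * Hq)
        + γ ^ 2 • mex ν (fun ω => S ω * A * S ω)) i j
        = A i j - γ * ((Hq * A) i j) - γ * ((A * Hq) i j)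
          + γ ^ 2 * (∫ ω, (S ω * A * S ω) i j ∂ν) := by
      rw [hPdef, hexp Hq A]
      simp only [Matrix.add_apply, Matrix.sub_apply, Matrix.smul_apply, smul_eq_mul,
        mex, Matrix.of_apply]
      ring
    show (∫ ω, (((1 : Matrix (Fin d) (Fin d) ℝ) - γ • S ω) * A * (1 - γ • S ω)) i j ∂ν) = _
    rw [hRHS]
    simp_rw [h1]
    have hI1 : Integrable (fun ω => γ * ((S ω * A) i j)) ν := (hSA A i j).const_mul γ
    have hI2 : Integrable (fun ω => γ * ((A * S ω) i j)) ν := (hAS A i j).const_mul γ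
    have hI3 : Integrable (fun ω => γ ^ 2 * ((S ω * A * S ω) i j)) ν :=
      (hIntM A i j).const_mul _
    have hI4 : Integrable (fun ω => A i j - γ * ((S ω * A) i j)) ν :=
      (integrable_const (A i j)).sub hI1
    have hI5 : Integrable (fun ω => A i j - γ * ((S ω * A) i j) - γ * ((A * S ω) i j)) ν :=
      hI4.sub hI2
    rw [integral_add hI5 hI3, integral_sub hI4 hI2,
      integral_sub (integrable_const (A i j)) hI1,
      MeasureTheory.integral_const_mul, MeasureTheory.integral_const_mul,
      MeasureTheory.integral_const_mul, hMSA A i j, hMAS A i j, integral_const]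
    simp [measure_univ]
  -- recursion in closed form
  have hstep : ∀ k : ℕ, Bseq (k + 1) = P * Bseq k * P - γ ^ 2 • (Hq * Bseq k * Hq)
      + γ ^ 2 • mex ν (fun ω => S ω * Bseq k * S ω) := fun k => by
    rw [hBseqStep k, key]
  -- positivity of the iterates
  have hBpsd : ∀ k : ℕ, (Bseq k).PosSemidef := by
    intro k
    induction k with
    | zero => rw [hBseq0]; exact hB0psd
    | succ k ih =>
      rw [hBseqStep k]
      refine mex_psd_aux ν _ (fun ω => ?_) (hIntT (Bseq k))
      have hC : ((1 : Matrix (Fin d) (Fin d) ℝ) - γ • S ω)ᴴ = 1 - γ • S ω := by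
        rw [conjTranspose_sub, conjTranspose_smul, (hSpsd ω).1.eq]
        simp
      have := ih.mul_mul_conjTranspose_same ((1 : Matrix (Fin d) (Fin d) ℝ) - γ • S ω)
      rw [hC] at this
      exact this
  have hGpsd : ∀ k : ℕ, (mex ν (fun ω => S ω * Bseq k * S ω)).PosSemidef := by
    intro k
    refine mex_psd_aux ν _ (fun ω => ?_) (hIntM (Bseq k))
    have := (hBpsd k).mul_mul_conjTranspose_same (S ω)
    rw [(hSpsd ω).1.eq] at this
    exact this
  -- split t = m + 1
  obtain ⟨m, rfl⟩ : ∃ m, t = m + 1 := ⟨t - 1, (Nat.succ_pred_eq_of_pos ht1).symm⟩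
  have hmN : m ≤ N := Nat.le_of_succ_le htN
  unfold loew
  simp only [Nat.add_sub_cancel]
  have hsum : ∑ k ∈ Finset.range (m + 1), Bseq k
      = B0 + (P * (∑ k ∈ Finset.range m, Bseq k) * P
        - γ ^ 2 • (Hq * (∑ k ∈ Finset.range m, Bseq k) * Hq)
        + γ ^ 2 • ∑ k ∈ Finset.range m, mex ν (fun ω => S ω * Bseq k * S ω)) := by
    rw [Finset.sum_range_succ', hBseq0]
    simp_rw [hstep]
    rw [Finset.sum_add_distrib, Finset.sum_sub_distrib, ← Finset.smul_sum, ← Finset.smul_sum]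
    have e2 : P * (∑ k ∈ Finset.range m, Bseq k) * P
        = ∑ k ∈ Finset.range m, P * Bseq k * P := by
      rw [Finset.mul_sum, Finset.sum_mul]
    have e3 : Hq * (∑ k ∈ Finset.range m, Bseq k) * Hq
        = ∑ k ∈ Finset.range m, Hq * Bseq k * Hq := by
      rw [Finset.mul_sum, Finset.sum_mul]
    rw [e2, e3]
    abel
  -- expectation of S * S_N * S as a sum
  have hmexN : mex ν (fun ω => S ω * (∑ k ∈ Finset.range N, Bseq k) * S ω)
      = ∑ k ∈ Finset.range N, mex ν (fun ω => S ω * Bseq k * S ω) := by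
    ext i j
    show (∫ ω, (S ω * (∑ k ∈ Finset.range N, Bseq k) * S ω) i j ∂ν) = _
    have hpt : ∀ ω, (S ω * (∑ k ∈ Finset.range N, Bseq k) * S ω) i j
        = ∑ k ∈ Finset.range N, (S ω * Bseq k * S ω) i j := by
      intro ω
      rw [Finset.mul_sum, Finset.sum_mul, Matrix.sum_apply]
    simp_rw [hpt]
    rw [integral_finset_sum _ fun k _ => hIntM (Bseq k) i j, Matrix.sum_apply]
    rfl
  -- final rearrangement
  have hdiff : P * (∑ k ∈ Finset.range m, Bseq k) * P + γ ^ 2 • mex ν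
        (fun ω => S ω * (∑ k ∈ Finset.range N, Bseq k) * S ω) + B0
      - ∑ k ∈ Finset.range (m + 1), Bseq k
      = γ ^ 2 • ((∑ k ∈ Finset.Ico m N, mex ν (fun ω => S ω * Bseq k * S ω))
        + Hq * (∑ k ∈ Finset.range m, Bseq k) * Hq) := by
    rw [hsum, hmexN,
      ← Finset.sum_range_add_sum_Ico (fun k => mex ν (fun ω => S ω * Bseq k * S ω)) hmN]
    module
  rw [hdiff]
  refine psd_smul_aux (sq_nonneg γ) ((psd_sum_aux _ _ fun k _ => hGpsd k).add ?_)
  have hSnmpsd : (∑ k ∈ Finset.range m, Bseq k).PosSemidef :=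
    psd_sum_aux _ _ fun k _ => hBpsd k
  have := hSnmpsd.mul_mul_conjTranspose_same Hq
  rw [hHqpd.1.eq] at this
  exact this

end
end

section
/- (Bound for M_B^q ∘ S_t.) For every 1 ≤ t ≤ N, if γ < 1/(α_B tr(H^q)), then M_B^q ∘ S_t ⪯ [α_B · tr(B_0 − (I − γH^q)^t B_0 (I − γH^q)^t) / (γ (1 − γ α_B tr(H^q)))] · H^q. -/
open MeasureTheory Matrix Finset

noncomputable section

/-!
Statement 15 (bound for `M_B^q ∘ S_t`): for `1 ≤ t ≤ N`, if
`γ < 1/(α_B tr(H^q))`, then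
`M_B^q ∘ S_t ⪯ [α_B tr(B₀ − (I−γH^q)^t B₀ (I−γH^q)^t) / (γ(1 − γα_B tr H^q))] · H^q`.
-/

variable {d : ℕ} {Ω : Type*} [MeasurableSpace Ω] (μ : Measure Ω)

lemma mex_quadform (F : Ω → Matrix (Fin d) (Fin d) ℝ)
    (hInt : ∀ i j, Integrable (fun ω => F ω i j) μ) (x : Fin d → ℝ) :
    x ⬝ᵥ (mex μ F) *ᵥ x = ∫ ω, x ⬝ᵥ F ω *ᵥ x ∂μ := by
  have h1 : ∀ ω, x ⬝ᵥ F ω *ᵥ x = ∑ i, ∑ j, x i * (F ω i j * x j) := by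
    intro ω
    simp [dotProduct, mulVec, Finset.mul_sum]
  simp only [h1]
  rw [integral_finset_sum _ (fun i _ => ?_)]
  · simp only [dotProduct, mulVec, mex, Matrix.of_apply, Finset.mul_sum]
    refine Finset.sum_congr rfl fun i _ => ?_
    rw [integral_finset_sum _ (fun j _ => ((hInt i j).mul_const _).const_mul _)]
    refine Finset.sum_congr rfl fun j _ => ?_
    rw [MeasureTheory.integral_const_mul, MeasureTheory.integral_mul_const]
  · exact integrable_finset_sum _ (fun j _ => ((hInt i j).mul_const _).const_mul _)

lemma mex_posSemidef (F : Ω → Matrix (Fin d) (Fin d) ℝ)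
    (hpsd : ∀ ω, (F ω).PosSemidef)
    (hInt : ∀ i j, Integrable (fun ω => F ω i j) μ) :
    (mex μ F).PosSemidef := by
  refine Matrix.PosSemidef.of_dotProduct_mulVec_nonneg ?_ ?_
  · ext i j
    simp only [conjTranspose_apply, mex, Matrix.of_apply, star_trivial]
    exact congrArg (fun g => ∫ ω, g ω ∂μ) (funext fun ω => congrFun (congrFun ((hpsd ω).isHermitian) i) j)
  · intro x
    rw [star_trivial, mex_quadform μ F hInt x]
    exact integral_nonneg fun ω => by simpa [star_trivial] using (hpsd ω).dotProduct_mulVec_nonneg x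

lemma expand_contr (P B : Matrix (Fin d) (Fin d) ℝ) (γ : ℝ) :
    ((1 : Matrix (Fin d) (Fin d) ℝ) - γ • P) * B * ((1 : Matrix (Fin d) (Fin d) ℝ) - γ • P)
      = B - γ • (P * B) - γ • (B * P) + (γ * γ) • (P * B * P) := by
  simp only [sub_mul, mul_sub, one_mul, mul_one, smul_mul_assoc, mul_smul_comm, smul_smul,
    smul_sub]
  abel

lemma expand_center (P B Q : Matrix (Fin d) (Fin d) ℝ) :
    (Q - P) * B * (Q - P) = Q * B * Q - P * B * Q - Q * B * P + P * B * P := by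
  simp only [sub_mul, mul_sub]
  abel

section
variable (S : Ω → Matrix (Fin d) (Fin d) ℝ)
  (IntS : ∀ i j, Integrable (fun ω => S ω i j) μ)

include IntS in
lemma int_const_mulL (B : Matrix (Fin d) (Fin d) ℝ) (i j : Fin d) :
    Integrable (fun ω => (S ω * B) i j) μ := by
  simp only [Matrix.mul_apply]
  exact integrable_finset_sum _ (fun k _ => (IntS i k).mul_const _)

include IntS in
lemma int_const_mulR (B : Matrix (Fin d) (Fin d) ℝ) (i j : Fin d) :
    Integrable (fun ω => (B * S ω) i j) μ := by
  simp only [Matrix.mul_apply]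
  exact integrable_finset_sum _ (fun k _ => (IntS k j).const_mul _)

include IntS in
lemma mex_const_mulL (B : Matrix (Fin d) (Fin d) ℝ) (i j : Fin d) :
    ∫ ω, (S ω * B) i j ∂μ = (mex μ S * B) i j := by
  simp only [Matrix.mul_apply, mex, Matrix.of_apply]
  rw [integral_finset_sum _ (fun k _ => (IntS i k).mul_const _)]
  exact Finset.sum_congr rfl fun k _ => integral_mul_const _ _

include IntS in
lemma mex_const_mulR (B : Matrix (Fin d) (Fin d) ℝ) (i j : Fin d) :
    ∫ ω, (B * S ω) i j ∂μ = (B * mex μ S) i j := by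
  simp only [Matrix.mul_apply, mex, Matrix.of_apply]
  rw [integral_finset_sum _ (fun k _ => (IntS k j).const_mul _)]
  exact Finset.sum_congr rfl fun k _ => MeasureTheory.integral_const_mul _ _

end

lemma psd_smul {c : ℝ} (hc : 0 ≤ c) {A : Matrix (Fin d) (Fin d) ℝ} (hA : A.PosSemidef) :
    (c • A).PosSemidef := by
  refine Matrix.PosSemidef.of_dotProduct_mulVec_nonneg ?_ (fun x => ?_)
  · ext i j
    simp only [conjTranspose_apply, Matrix.smul_apply, star_trivial, smul_eq_mul]
    rw [← hA.isHermitian.apply]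
    rfl
  · rw [smul_mulVec, dotProduct_smul, smul_eq_mul]
    exact mul_nonneg hc (hA.dotProduct_mulVec_nonneg x)

lemma psd_diag_nonneg {A : Matrix (Fin d) (Fin d) ℝ} (hA : A.PosSemidef) (i : Fin d) :
    0 ≤ A i i := by
  have := hA.dotProduct_mulVec_nonneg (Pi.single i 1)
  simpa [dotProduct, mulVec, Pi.single_apply, Finset.sum_ite_eq, Finset.sum_ite_eq'] using this

lemma psd_trace_nonneg {A : Matrix (Fin d) (Fin d) ℝ} (hA : A.PosSemidef) :
    0 ≤ A.trace :=
  Finset.sum_nonneg fun i _ => psd_diag_nonneg hA i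

set_option maxHeartbeats 1000000 in
lemma psd_trace_mul_nonneg {A B : Matrix (Fin d) (Fin d) ℝ} (hA : A.PosSemidef)
    (hB : B.PosSemidef) : 0 ≤ (A * B).trace := by
  have h := (hA.hadamard hB).dotProduct_mulVec_nonneg (fun _ => (1:ℝ))
  have e : star (fun _ : Fin d => (1:ℝ)) ⬝ᵥ ((A ⊙ B) *ᵥ fun _ => 1) = (A * B).trace := by
    simp only [dotProduct, mulVec, hadamard_apply, star_trivial, trace, diag_apply, mul_apply,
      one_mul, mul_one]
    refine Finset.sum_congr rfl fun i _ => Finset.sum_congr rfl fun j _ => ?_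
    rw [← hB.isHermitian.apply i j, star_trivial]
  rw [← e]
  exact h

section
variable [IsProbabilityMeasure μ] (S : Ω → Matrix (Fin d) (Fin d) ℝ)
  (IntS : ∀ i j, Integrable (fun ω => S ω i j) μ)
  (IntM : ∀ B : Matrix (Fin d) (Fin d) ℝ, ∀ i j : Fin d,
    Integrable (fun ω => (S ω * B * S ω) i j) μ)

include IntS IntM in
lemma mex_step_eq (B : Matrix (Fin d) (Fin d) ℝ) (γ : ℝ) :
    mex μ (fun ω => ((1 : Matrix (Fin d) (Fin d) ℝ) - γ • S ω) * B *
        ((1 : Matrix (Fin d) (Fin d) ℝ) - γ • S ω))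
      = B - γ • (mex μ S * B) - γ • (B * mex μ S)
        + (γ * γ) • mex μ (fun ω => S ω * B * S ω) := by
  have hIL := int_const_mulL μ S IntS B
  have hIR := int_const_mulR μ S IntS B
  ext i j
  simp only [mex, Matrix.of_apply, expand_contr, Matrix.add_apply, Matrix.sub_apply,
    Matrix.smul_apply, smul_eq_mul]
  have I1 : Integrable (fun ω => B i j - γ * (S ω * B) i j) μ :=
    (integrable_const _).sub ((hIL i j).const_mul γ)
  have I2 : Integrable (fun ω => B i j - γ * (S ω * B) i j - γ * (B * S ω) i j) μ :=
    I1.sub ((hIR i j).const_mul γ)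
  rw [integral_add I2 ((IntM B i j).const_mul _),
      integral_sub I1 ((hIR i j).const_mul γ),
      integral_sub (integrable_const _) ((hIL i j).const_mul γ),
      integral_const, MeasureTheory.integral_const_mul, MeasureTheory.integral_const_mul,
      MeasureTheory.integral_const_mul, mex_const_mulL μ S IntS B i j,
      mex_const_mulR μ S IntS B i j]
  simp [mex]

include IntS IntM in
lemma mex_center_eq (B : Matrix (Fin d) (Fin d) ℝ) :
    mex μ (fun ω => (S ω - mex μ S) * B * (S ω - mex μ S))
      = mex μ (fun ω => S ω * B * S ω) - mex μ S * B * mex μ S := by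
  set H := mex μ S with hH
  have hIL : ∀ i j, Integrable (fun ω => (S ω * (B * H)) i j) μ :=
    int_const_mulL μ S IntS (B * H)
  have hIR : ∀ i j, Integrable (fun ω => ((H * B) * S ω) i j) μ :=
    int_const_mulR μ S IntS (H * B)
  have hptw : ∀ ω, (S ω - H) * B * (S ω - H)
      = S ω * B * S ω - (H * B) * S ω - S ω * (B * H) + H * B * H := by
    intro ω
    rw [expand_center H B (S ω)]
    simp [mul_assoc]
  ext i j
  simp only [mex, Matrix.of_apply, hptw, Matrix.add_apply, Matrix.sub_apply,
    Matrix.smul_apply, smul_eq_mul]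
  have I1 : Integrable (fun ω => (S ω * B * S ω) i j - (H * B * S ω) i j) μ :=
    (IntM B i j).sub (hIR i j)
  have I2 : Integrable (fun ω => (S ω * B * S ω) i j - (H * B * S ω) i j
      - (S ω * (B * H)) i j) μ := I1.sub (hIL i j)
  rw [integral_add I2 (integrable_const _),
      integral_sub I1 (hIL i j),
      integral_sub (IntM B i j) (hIR i j),
      integral_const, mex_const_mulL μ S IntS (B * H) i j,
      mex_const_mulR μ S IntS (H * B) i j]
  simp only [measure_univ, ENNReal.toReal_one, probReal_univ, one_smul, ← hH]
  have h1 : (H * (B * H)) i j = (H * B * H) i j := by rw [mul_assoc]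
  rw [h1]
  ring

omit [IsProbabilityMeasure μ] in
include IntM in
lemma mex_sum_eq (Bs : ℕ → Matrix (Fin d) (Fin d) ℝ) (t : ℕ) :
    mex μ (fun ω => S ω * (∑ k ∈ Finset.range t, Bs k) * S ω)
      = ∑ k ∈ Finset.range t, mex μ (fun ω => S ω * Bs k * S ω) := by
  have hptw : ∀ ω, S ω * (∑ k ∈ Finset.range t, Bs k) * S ω
      = ∑ k ∈ Finset.range t, S ω * Bs k * S ω := by
    intro ω
    rw [Finset.mul_sum, Finset.sum_mul]
  ext i j
  simp only [mex, Matrix.of_apply, hptw, Finset.sum_apply, Matrix.sum_apply]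
  rw [integral_finset_sum _ (fun k _ => IntM (Bs k) i j)]

end

lemma isHerm_smul_real {c : ℝ} {A : Matrix (Fin d) (Fin d) ℝ} (h : A.IsHermitian) :
    (c • A).IsHermitian := by
  ext i j
  simp only [conjTranspose_apply, Matrix.smul_apply, star_trivial, smul_eq_mul]
  conv_rhs => rw [← h.apply i j, star_trivial]

lemma triple_std (M N : Matrix (Fin d) (Fin d) ℝ) (k i j : Fin d) :
    (M * single k k (1:ℝ) * N) i j = M i k * N k j := by
  rw [Matrix.mul_apply, Finset.sum_eq_single k]
  · rw [Matrix.mul_single_apply_same, mul_one]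
  · intro b _ hb
    rw [Matrix.mul_single_apply_of_ne (1:ℝ) k k i b hb, zero_mul]
  · simp

theorem bound_MBq_St
    (d N : ℕ) (hN : 0 < N)
    (γ : ℝ) (hγ : 0 < γ)
    (Ωs : Type) [MeasurableSpace Ωs] (ν : Measure Ωs) [IsProbabilityMeasure ν]
    (S : Ωs → Matrix (Fin d) (Fin d) ℝ)
    (hSpsd : ∀ ω, (S ω).PosSemidef)
    (Hq : Matrix (Fin d) (Fin d) ℝ) (hHqpd : Hq.PosDef)
    (hSmean : mex ν S = Hq)
    (hcontr : ((1 : Matrix (Fin d) (Fin d) ℝ) - γ • Hq).PosSemidef)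
    (hIntM : ∀ A : Matrix (Fin d) (Fin d) ℝ, ∀ i j : Fin d,
      Integrable (fun ω => (S ω * A * S ω) i j) ν)
    (hIntT : ∀ A : Matrix (Fin d) (Fin d) ℝ, ∀ i j : Fin d,
      Integrable (fun ω =>
        (((1 : Matrix (Fin d) (Fin d) ℝ) - γ • S ω) * A *
          ((1 : Matrix (Fin d) (Fin d) ℝ) - γ • S ω)) i j) ν)
    (αB : ℝ) (hαB : 0 < αB)
    (hfourth : ∀ A : Matrix (Fin d) (Fin d) ℝ, A.PosSemidef →
      loew (mex ν (fun ω => S ω * A * S ω)) ((αB * (Hq * A).trace) • Hq))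
    (B0 : Matrix (Fin d) (Fin d) ℝ) (hB0psd : B0.PosSemidef)
    (Bseq : ℕ → Matrix (Fin d) (Fin d) ℝ)
    (hBseq0 : Bseq 0 = B0)
    (hBseqStep : ∀ t : ℕ, Bseq (t + 1) =
      mex ν (fun ω => ((1 : Matrix (Fin d) (Fin d) ℝ) - γ • S ω) * Bseq t *
        ((1 : Matrix (Fin d) (Fin d) ℝ) - γ • S ω)))
    (hstep : γ < 1 / (αB * Hq.trace))
    (t : ℕ) (ht1 : 1 ≤ t) (htN : t ≤ N) :
    loew (mex ν (fun ω => S ω * (∑ k ∈ Finset.range t, Bseq k) * S ω))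
      ((αB *
          (B0 - ((1 : Matrix (Fin d) (Fin d) ℝ) - γ • Hq) ^ t * B0 *
            ((1 : Matrix (Fin d) (Fin d) ℝ) - γ • Hq) ^ t).trace /
        (γ * (1 - γ * αB * Hq.trace))) • Hq) := by
  have hγne : γ ≠ 0 := ne_of_gt hγ
  -- integrability of the entries of S
  have IntS : ∀ i j, Integrable (fun ω => S ω i j) ν := by
    intro i j
    have hM := hIntM (single j j (1:ℝ)) i j
    have hT := hIntT (single j j (1:ℝ)) i j
    simp only [triple_std] at hM hT
    have hsub : ∀ ω : Ωs, ∀ a b : Fin d,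
        ((1 : Matrix (Fin d) (Fin d) ℝ) - γ • S ω) a b
          = (if a = b then (1:ℝ) else 0) - γ * S ω a b := by
      intro ω a b
      simp [Matrix.sub_apply, Matrix.smul_apply, Matrix.one_apply]
    simp only [hsub] at hT
    by_cases hij : i = j
    · subst hij
      simp only [eq_self_iff_true, if_true] at hT
      have key : Integrable (fun ω => 2 * γ * S ω i i) ν := by
        have h1 : Integrable (fun ω =>
            (1 : ℝ) - (1 - γ * S ω i i) * (1 - γ * S ω i i)
              + γ * γ * (S ω i i * S ω i i)) ν :=
          ((integrable_const _).sub hT).add (hM.const_mul _)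
        refine h1.congr (Filter.Eventually.of_forall fun ω => ?_)
        ring
      have := key.const_mul (1 / (2 * γ))
      refine this.congr (Filter.Eventually.of_forall fun ω => ?_)
      field_simp
    · simp only [if_neg hij] at hT
      have key : Integrable (fun ω => -(γ * S ω i j)) ν := by
        have h1 : Integrable (fun ω =>
            (0 - γ * S ω i j) * (1 - γ * S ω j j)
              - γ * γ * (S ω i j * S ω j j)) ν := hT.sub (hM.const_mul _)
        refine h1.congr (Filter.Eventually.of_forall fun ω => ?_)
        ring
      have := key.const_mul (-(1 / γ))
      refine this.congr (Filter.Eventually.of_forall fun ω => ?_)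
      field_simp
  -- every Bseq k is PSD
  have hBpsd : ∀ k, (Bseq k).PosSemidef := by
    intro k
    induction k with
    | zero => rw [hBseq0]; exact hB0psd
    | succ k ih =>
      rw [hBseqStep]
      refine mex_posSemidef ν _ (fun ω => ?_) (hIntT (Bseq k))
      have hherm : ((1 : Matrix (Fin d) (Fin d) ℝ) - γ • S ω).IsHermitian :=
        Matrix.isHermitian_one.sub (isHerm_smul_real (hSpsd ω).isHermitian)
      have := ih.mul_mul_conjTranspose_same ((1 : Matrix (Fin d) (Fin d) ℝ) - γ • S ω)
      rwa [hherm.eq] at this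
  set P : Matrix (Fin d) (Fin d) ℝ := (1 : Matrix (Fin d) (Fin d) ℝ) - γ • Hq with hP
  clear_value P
  set M : ℕ → Matrix (Fin d) (Fin d) ℝ :=
    fun k => mex ν (fun ω => S ω * Bseq k * S ω) with hM
  clear_value M
  -- one-step expansion
  have hstepEq : ∀ k, Bseq (k+1)
      = Bseq k - γ • (Hq * Bseq k) - γ • (Bseq k * Hq) + (γ * γ) • M k := by
    intro k
    rw [hBseqStep, mex_step_eq ν S IntS hIntM, hSmean, hM]
  -- M k dominates Hq * B * Hq
  have hMk_ge : ∀ k, (M k - Hq * Bseq k * Hq).PosSemidef := by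
    intro k
    have hcen := mex_center_eq ν S IntS hIntM (Bseq k)
    rw [hSmean] at hcen
    rw [hM, ← hcen]
    refine mex_posSemidef ν _ (fun ω => ?_) (fun i j => ?_)
    · have hherm : (S ω - Hq).IsHermitian :=
        (hSpsd ω).isHermitian.sub hHqpd.isHermitian
      have := (hBpsd k).mul_mul_conjTranspose_same (S ω - Hq)
      rwa [hherm.eq] at this
    · have hptw : ∀ ω, ((S ω - Hq) * Bseq k * (S ω - Hq)) i j
          = (S ω * Bseq k * S ω) i j - ((Hq * Bseq k) * S ω) i j
            - (S ω * (Bseq k * Hq)) i j + (Hq * Bseq k * Hq) i j := by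
        intro ω
        rw [expand_center Hq (Bseq k) (S ω)]
        simp only [Matrix.add_apply, Matrix.sub_apply, mul_assoc]
      simp only [hptw]
      exact (((hIntM (Bseq k) i j).sub (int_const_mulR ν S IntS (Hq * Bseq k) i j)).sub
        (int_const_mulL ν S IntS (Bseq k * Hq) i j)).add (integrable_const _)
  -- bias contracts at least as fast as the deterministic part
  have hcontr2 : ∀ k, (Bseq (k+1) - P * Bseq k * P).PosSemidef := by
    intro k
    have heq : Bseq (k+1) - P * Bseq k * P = (γ * γ) • (M k - Hq * Bseq k * Hq) := by
      rw [hstepEq, hP, expand_contr, smul_sub]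
      abel
    rw [heq]
    exact psd_smul (mul_self_nonneg γ) (hMk_ge k)
  have hC : ∀ k, (Bseq k - P ^ k * B0 * P ^ k).PosSemidef := by
    intro k
    induction k with
    | zero => rw [hBseq0]; simpa using Matrix.PosSemidef.zero
    | succ k ih =>
      have hHerm := hcontr.isHermitian
      have h1 := ih.mul_mul_conjTranspose_same P
      have hcomm : P * P ^ k = P ^ k * P := by rw [← pow_succ', ← pow_succ]
      have h2 : P * (Bseq k - P ^ k * B0 * P ^ k) * Pᴴ
          = P * Bseq k * P - P ^ (k+1) * B0 * P ^ (k+1) := by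
        rw [hHerm.eq, mul_sub, sub_mul, pow_succ]
        simp only [← mul_assoc]
        rw [hcomm]
      rw [h2] at h1
      have h3 := (hcontr2 k).add h1
      have h4 : Bseq (k+1) - P * Bseq k * P
          + (P * Bseq k * P - P ^ (k+1) * B0 * P ^ (k+1))
          = Bseq (k+1) - P ^ (k+1) * B0 * P ^ (k+1) := sub_add_sub_cancel _ _ _
      rwa [h4] at h3
  -- scalar quantities
  set b : ℕ → ℝ := fun k => (Hq * Bseq k).trace with hb
  have hbnn : ∀ k, 0 ≤ b k := fun k =>
    psd_trace_mul_nonneg hHqpd.posSemidef (hBpsd k)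
  have hMtr : ∀ k, (M k).trace ≤ αB * b k * Hq.trace := by
    intro k
    have h := hfourth (Bseq k) (hBpsd k)
    have h2 := psd_trace_nonneg h
    rw [Matrix.trace_sub, Matrix.trace_smul, smul_eq_mul] at h2
    simp only [hM, hb]
    linarith [h2]
  have hτ : ∀ k, (Bseq (k+1)).trace
      ≤ (Bseq k).trace - γ * (2 - γ * αB * Hq.trace) * b k := by
    intro k
    have htr : (Bseq (k+1)).trace
        = (Bseq k).trace - γ * b k - γ * b k + γ * γ * (M k).trace := by
      rw [hstepEq, Matrix.trace_add, Matrix.trace_sub, Matrix.trace_sub,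
        Matrix.trace_smul, Matrix.trace_smul, Matrix.trace_smul,
        Matrix.trace_mul_comm (Bseq k) Hq]
      simp [hb, smul_eq_mul]
    have hγγ : (0:ℝ) ≤ γ * γ := mul_self_nonneg γ
    have := mul_le_mul_of_nonneg_left (hMtr k) hγγ
    rw [htr]
    nlinarith [this]
  have hsum : ∀ n : ℕ, γ * (2 - γ * αB * Hq.trace) * (∑ k ∈ Finset.range n, b k)
      ≤ (Bseq 0).trace - (Bseq n).trace := by
    intro n
    induction n with
    | zero => simp
    | succ n ih =>
      rw [Finset.sum_range_succ, mul_add]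
      have := hτ n
      linarith
  -- positivity bookkeeping
  have hpos : 0 < αB * Hq.trace := by
    by_contra hle
    push_neg at hle
    have : 1 / (αB * Hq.trace) ≤ 0 := one_div_nonpos.mpr hle
    linarith
  have hc1 : γ * αB * Hq.trace < 1 := by
    have := (lt_div_iff₀ hpos).mp hstep
    calc γ * αB * Hq.trace = γ * (αB * Hq.trace) := by ring
    _ < 1 := this
  have hden : 0 < γ * (1 - γ * αB * Hq.trace) :=
    mul_pos hγ (by linarith)
  set D : ℝ := (B0 - P ^ t * B0 * P ^ t).trace with hD
  have hτt : (P ^ t * B0 * P ^ t).trace ≤ (Bseq t).trace := by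
    have := psd_trace_nonneg (hC t)
    rw [Matrix.trace_sub] at this
    linarith
  have hsum2 : γ * (1 - γ * αB * Hq.trace) * (∑ k ∈ Finset.range t, b k) ≤ D := by
    have h1 := hsum t
    have hSig : 0 ≤ ∑ k ∈ Finset.range t, b k :=
      Finset.sum_nonneg fun k _ => hbnn k
    have h2 : γ * (1 - γ * αB * Hq.trace) * (∑ k ∈ Finset.range t, b k)
        ≤ γ * (2 - γ * αB * Hq.trace) * (∑ k ∈ Finset.range t, b k) := by
      apply mul_le_mul_of_nonneg_right _ hSig
      nlinarith
    rw [hBseq0] at h1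
    have hDeq : D = B0.trace - (P ^ t * B0 * P ^ t).trace := by
      rw [hD, Matrix.trace_sub]
    linarith
  have hSigle : αB * (∑ k ∈ Finset.range t, b k)
      ≤ αB * D / (γ * (1 - γ * αB * Hq.trace)) := by
    rw [mul_div_assoc]
    apply mul_le_mul_of_nonneg_left _ (le_of_lt hαB)
    rw [le_div_iff₀ hden]
    linarith [hsum2]
  -- assemble the final Loewner bound
  unfold loew
  rw [mex_sum_eq ν S hIntM Bseq t]
  have hpart : (((αB * (∑ k ∈ Finset.range t, b k)) • Hq)
      - ∑ k ∈ Finset.range t, M k).PosSemidef := by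
    have : (αB * (∑ k ∈ Finset.range t, b k)) • Hq
        = ∑ k ∈ Finset.range t, (αB * b k) • Hq := by
      rw [Finset.mul_sum, Finset.sum_smul]
    rw [this, ← Finset.sum_sub_distrib]
    refine Finset.sum_induction _ _ (fun a b' ha hb' => ha.add hb') Matrix.PosSemidef.zero ?_
    intro k _
    simp only [hb, hM]
    exact hfourth (Bseq k) (hBpsd k)
  have hscal : ((αB * D / (γ * (1 - γ * αB * Hq.trace))
      - αB * (∑ k ∈ Finset.range t, b k)) • Hq).PosSemidef :=
    psd_smul (by linarith [hSigle]) hHqpd.posSemidef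
  have := hscal.add hpart
  have hfin : (αB * D / (γ * (1 - γ * αB * Hq.trace))
        - αB * (∑ k ∈ Finset.range t, b k)) • Hq
      + (((αB * (∑ k ∈ Finset.range t, b k)) • Hq) - ∑ k ∈ Finset.range t, M k)
      = (αB * D / (γ * (1 - γ * αB * Hq.trace))) • Hq - ∑ k ∈ Finset.range t, M k := by
    rw [sub_smul]
    abel
  rw [hfin] at this
  simp only [hM] at this
  exact this

end
end

section
/- (A bound for the bias.) If γ < 1/(α_B tr(H^q)), then bias := (1/N²) Σ_{t=0}^{N−1} Σ_{k=t}^{N−1} ⟨(I − γH^q)^{k−t} H^q, B_t⟩ satisfies bias ≤ [2α_B (‖w_0 − w^{q*}‖²_{I^q_{0:k*}} + Nγ ‖w_0 − w^{q*}‖²_{H^q_{k*:∞}}) / (Nγ (1 − γα_B tr(H^q)))] · (k*/N + Nγ² Σ_{i>k*} (λ_i^q)²) + (1/(γ²N²)) ‖w_0 − w^{q*}‖²_{(H^q_{0:k*})^{-1}} + ‖w_0 − w^{q*}‖²_{H^q_{k*:∞}}. -/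
open MeasureTheory Matrix Finset

noncomputable section

/-!
Statement 17 (a bound for the bias): if `γ < 1/(α_B tr(H^q))`, then the bias
term of quantized SGD is bounded as stated, with `B₀ = (w₀−w^{q*})(w₀−w^{q*})ᵀ`.
-/

namespace Aux
variable {d : ℕ}

lemma vecMulVec_mulVec' (a b x : Fin d → ℝ) : vecMulVec a b *ᵥ x = (b ⬝ᵥ x) • a := by
  ext i
  simp [mulVec, vecMulVec_apply, dotProduct, Finset.mul_sum, mul_comm, mul_left_comm, mul_assoc]

lemma mul_vecMulVec (M : Matrix (Fin d) (Fin d) ℝ) (a b : Fin d → ℝ) :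
    M * vecMulVec a b = vecMulVec (M *ᵥ a) b := by
  ext i j
  simp only [mul_apply, vecMulVec_apply, mulVec, dotProduct, Finset.sum_mul]
  exact Finset.sum_congr rfl fun k _ => by ring

lemma vecMulVec_smul (c : ℝ) (a b : Fin d → ℝ) :
    vecMulVec (c • a) b = c • vecMulVec a b := by
  ext i j; simp [vecMulVec_apply, mul_assoc]

lemma vecMulVec_transpose (a : Fin d → ℝ) : (vecMulVec a a)ᵀ = vecMulVec a a := by
  ext i j; simp [vecMulVec_apply, mul_comm]

lemma trace_vecMulVec_mul (a : Fin d → ℝ) (B : Matrix (Fin d) (Fin d) ℝ) :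
    (vecMulVec a a * B).trace = a ⬝ᵥ (B *ᵥ a) := by
  simp only [Matrix.trace, Matrix.diag, mul_apply, vecMulVec_apply, mulVec, dotProduct,
    Finset.mul_sum]
  rw [Finset.sum_comm]
  exact Finset.sum_congr rfl fun i _ => Finset.sum_congr rfl fun j _ => by ring

lemma psd_smul {A : Matrix (Fin d) (Fin d) ℝ} (h : A.PosSemidef) {c : ℝ} (hc : 0 ≤ c) :
    (c • A).PosSemidef := by
  refine Matrix.PosSemidef.of_dotProduct_mulVec_nonneg ?_ fun x => ?_
  · have h1 : Aᵀ = A := by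
      have h2 : Aᴴ = A := h.1
      rwa [Matrix.conjTranspose_eq_transpose_of_trivial] at h2
    simp only [Matrix.IsHermitian, Matrix.conjTranspose_eq_transpose_of_trivial,
      transpose_smul, h1]
  · have := h.dotProduct_mulVec_nonneg x
    rw [smul_mulVec, dotProduct_smul]
    exact mul_nonneg hc this

lemma loew_quad {A B : Matrix (Fin d) (Fin d) ℝ} (h : loew A B) (x : Fin d → ℝ) :
    x ⬝ᵥ (A *ᵥ x) ≤ x ⬝ᵥ (B *ᵥ x) := by
  have h2 := h.dotProduct_mulVec_nonneg x
  simp only [star_trivial, sub_mulVec, dotProduct_sub] at h2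
  linarith

lemma psd_vecMulVec (a : Fin d → ℝ) : (vecMulVec a a).PosSemidef := by
  refine Matrix.PosSemidef.of_dotProduct_mulVec_nonneg ?_ fun x => ?_
  · exact vecMulVec_transpose a
  · rw [star_trivial, vecMulVec_mulVec', dotProduct_smul]
    have : a ⬝ᵥ x = x ⬝ᵥ a := dotProduct_comm a x
    rw [smul_eq_mul, ← this]
    exact mul_self_nonneg _


lemma herm_transpose {A : Matrix (Fin d) (Fin d) ℝ} (h : A.IsHermitian) : Aᵀ = A := by
  have h2 : Aᴴ = A := h
  rwa [Matrix.conjTranspose_eq_transpose_of_trivial] at h2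

variable {Ωs : Type} [MeasurableSpace Ωs] {ν : Measure Ωs}

lemma mex_apply (A : Ωs → Matrix (Fin d) (Fin d) ℝ) (i j : Fin d) :
    mex ν A i j = ∫ ω, A ω i j ∂ν := rfl

lemma mex_quad (A : Ωs → Matrix (Fin d) (Fin d) ℝ)
    (hint : ∀ i j, Integrable (fun ω => A ω i j) ν) (x : Fin d → ℝ) :
    x ⬝ᵥ ((mex ν A) *ᵥ x) = ∫ ω, x ⬝ᵥ (A ω *ᵥ x) ∂ν := by
  simp only [dotProduct, mulVec, mex, Matrix.of_apply]
  rw [integral_finset_sum]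
  · refine Finset.sum_congr rfl fun i _ => ?_
    rw [integral_const_mul]
    congr 1
    rw [integral_finset_sum]
    · exact Finset.sum_congr rfl fun j _ => (integral_mul_const _ _).symm
    · exact fun j _ => (hint i j).mul_const _
  · intro i _
    refine Integrable.const_mul ?_ _
    apply integrable_finset_sum
    exact fun j _ => (hint i j).mul_const _

lemma mex_psd (A : Ωs → Matrix (Fin d) (Fin d) ℝ)
    (hpsd : ∀ ω, (A ω).PosSemidef)
    (hint : ∀ i j, Integrable (fun ω => A ω i j) ν) :
    (mex ν A).PosSemidef := by
  refine Matrix.PosSemidef.of_dotProduct_mulVec_nonneg ?_ fun x => ?_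
  · have : ∀ ω, (A ω)ᵀ = A ω := fun ω => herm_transpose (hpsd ω).1
    show (mex ν A)ᴴ = mex ν A
    ext i j
    rw [Matrix.conjTranspose_apply, star_trivial, mex_apply, mex_apply]
    congr 1
    ext ω
    exact congrFun (congrFun (this ω) i) j
  · rw [star_trivial, mex_quad A hint]
    apply integral_nonneg
    intro ω
    have := (hpsd ω).dotProduct_mulVec_nonneg x
    rwa [star_trivial] at this

lemma tri_swap (f : ℕ → ℕ → ℝ) (N : ℕ) :
    ∑ t ∈ Finset.range N, ∑ s ∈ Finset.range t, f s t
      = ∑ s ∈ Finset.range N, ∑ t ∈ Finset.Ico (s+1) N, f s t := by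
  induction N with
  | zero => simp
  | succ n ih =>
    rw [Finset.sum_range_succ, ih, Finset.sum_range_succ]
    have h1 : ∀ s ∈ Finset.range n,
        (∑ t ∈ Finset.Ico (s+1) (n+1), f s t)
          = (∑ t ∈ Finset.Ico (s+1) n, f s t) + f s n := by
      intro s hs
      rw [Finset.sum_Ico_succ_top]
      exact Nat.succ_le_of_lt (Finset.mem_range.mp hs)
    rw [Finset.sum_congr rfl h1, Finset.sum_add_distrib]
    simp [Finset.Ico_self]

lemma geom_le_inv {x : ℝ} (h0 : 0 ≤ x) (h1 : x < 1) (K : ℕ) :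
    ∑ m ∈ Finset.range K, x ^ m ≤ 1 / (1 - x) := by
  rw [geom_sum_eq (ne_of_lt h1) K,
    show x ^ K - 1 = -(1 - x ^ K) by ring, show x - 1 = -(1 - x) by ring, neg_div_neg_eq,
    div_le_div_iff₀ (by linarith) (by linarith)]
  have hp : 0 ≤ x ^ K := pow_nonneg h0 K
  nlinarith

lemma geom_le_card {x : ℝ} (h0 : 0 ≤ x) (h1 : x ≤ 1) (K : ℕ) :
    ∑ m ∈ Finset.range K, x ^ m ≤ (K : ℝ) := by
  calc ∑ m ∈ Finset.range K, x ^ m ≤ ∑ m ∈ Finset.range K, 1 := by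
        refine Finset.sum_le_sum fun m _ => pow_le_one₀ h0 h1
    _ = (K : ℝ) := by simp


lemma expand_conj (γ : ℝ) (M A : Matrix (Fin d) (Fin d) ℝ) :
    ((1 : Matrix (Fin d) (Fin d) ℝ) - γ • M) * A * ((1 : Matrix (Fin d) (Fin d) ℝ) - γ • M)
      = A - γ • (M * A + A * M) + (γ^2) • (M * A * M) := by
  simp only [sub_mul, mul_sub, one_mul, mul_one, smul_mul_assoc, mul_smul_comm, smul_sub,
    smul_add, smul_smul]
  module

lemma S_entry_integrable [IsFiniteMeasure ν] (γ : ℝ) (hγ : γ ≠ 0) (S : Ωs → Matrix (Fin d) (Fin d) ℝ)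
    (hIntM : ∀ A : Matrix (Fin d) (Fin d) ℝ, ∀ i j : Fin d,
      Integrable (fun ω => (S ω * A * S ω) i j) ν)
    (hIntT : ∀ A : Matrix (Fin d) (Fin d) ℝ, ∀ i j : Fin d,
      Integrable (fun ω =>
        (((1 : Matrix (Fin d) (Fin d) ℝ) - γ • S ω) * A *
          ((1 : Matrix (Fin d) (Fin d) ℝ) - γ • S ω)) i j) ν)
    (i j : Fin d) : Integrable (fun ω => S ω i j) ν := by
  set A : Matrix (Fin d) (Fin d) ℝ := Matrix.single j j 1 with hA
  have hsum : Integrable (fun ω => (S ω * A + A * S ω) i j) ν := by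
    have heq : ∀ ω, (S ω * A + A * S ω) i j
        = (A i j
            - (((1 : Matrix (Fin d) (Fin d) ℝ) - γ • S ω) * A *
                ((1 : Matrix (Fin d) (Fin d) ℝ) - γ • S ω)) i j
            + γ^2 * (S ω * A * S ω) i j) / γ := by
      intro ω
      have h := congrFun (congrFun (expand_conj γ (S ω) A) i) j
      simp only [Matrix.sub_apply, Matrix.add_apply, Matrix.smul_apply, smul_eq_mul] at h
      rw [Matrix.add_apply]
      field_simp
      linarith
    rw [show (fun ω => (S ω * A + A * S ω) i j)
        = fun ω => (A i j
            - (((1 : Matrix (Fin d) (Fin d) ℝ) - γ • S ω) * A *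
                ((1 : Matrix (Fin d) (Fin d) ℝ) - γ • S ω)) i j
            + γ^2 * (S ω * A * S ω) i j) / γ from funext heq]
    exact ((((integrable_const _).sub (hIntT A i j)).add
      ((hIntM A i j).const_mul _)).div_const _)
  have hSA : ∀ ω, (S ω * A) i j = S ω i j := by
    intro ω
    simp [hA, Matrix.mul_apply, Matrix.single]
  have hAS : ∀ ω, (A * S ω) i j = if i = j then S ω j j else 0 := by
    intro ω
    by_cases h : i = j
    · simp [h, hA, Matrix.mul_apply, Matrix.single]
    · rw [if_neg h, hA, Matrix.mul_apply]
      refine Finset.sum_eq_zero fun x _ => ?_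
      have : Matrix.single j j (1:ℝ) i x = 0 := by
        simp [Matrix.single]
        exact fun hc => absurd hc.symm h
      rw [this, zero_mul]
  by_cases h : i = j
  · subst h
    have : (fun ω => S ω i i) = fun ω => (S ω * A + A * S ω) i i / 2 := by
      funext ω
      rw [Matrix.add_apply, hSA, hAS]
      simp
    rw [this]
    exact hsum.div_const _
  · have : (fun ω => S ω i j) = fun ω => (S ω * A + A * S ω) i j := by
      funext ω
      rw [Matrix.add_apply, hSA, hAS, if_neg h, add_zero]
    rw [this]
    exact hsum


lemma mex_conj_eq [IsProbabilityMeasure ν] (γ : ℝ) (S : Ωs → Matrix (Fin d) (Fin d) ℝ)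
    (Hq : Matrix (Fin d) (Fin d) ℝ) (hSmean : mex ν S = Hq)
    (hSint : ∀ i j, Integrable (fun ω => S ω i j) ν)
    (hIntM : ∀ A : Matrix (Fin d) (Fin d) ℝ, ∀ i j : Fin d,
      Integrable (fun ω => (S ω * A * S ω) i j) ν)
    (B : Matrix (Fin d) (Fin d) ℝ) :
    mex ν (fun ω => ((1 : Matrix (Fin d) (Fin d) ℝ) - γ • S ω) * B *
        ((1 : Matrix (Fin d) (Fin d) ℝ) - γ • S ω))
      = B - γ • (Hq * B + B * Hq) + (γ^2) • mex ν (fun ω => S ω * B * S ω) := by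
  have hSB : ∀ i j : Fin d, Integrable (fun ω => (S ω * B) i j) ν := by
    intro i j
    simp only [Matrix.mul_apply]
    exact integrable_finset_sum _ fun k _ => (hSint i k).mul_const _
  have hBS : ∀ i j : Fin d, Integrable (fun ω => (B * S ω) i j) ν := by
    intro i j
    simp only [Matrix.mul_apply]
    exact integrable_finset_sum _ fun k _ => (hSint k j).const_mul _
  ext i j
  have hptw : ∀ ω, (((1 : Matrix (Fin d) (Fin d) ℝ) - γ • S ω) * B *
        ((1 : Matrix (Fin d) (Fin d) ℝ) - γ • S ω)) i j
      = B i j - γ * ((S ω * B) i j + (B * S ω) i j) + γ^2 * (S ω * B * S ω) i j := by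
    intro ω
    have h := congrFun (congrFun (expand_conj γ (S ω) B) i) j
    simpa only [Matrix.sub_apply, Matrix.add_apply, Matrix.smul_apply, smul_eq_mul] using h
  rw [mex_apply]
  simp only [hptw]
  rw [integral_add, integral_sub, integral_const_mul, integral_const_mul, integral_add (hSB i j) (hBS i j)]
  · have h1 : ∫ ω, (S ω * B) i j ∂ν = (Hq * B) i j := by
      simp only [Matrix.mul_apply]
      rw [integral_finset_sum _ (fun k _ => (hSint i k).mul_const _)]
      refine Finset.sum_congr rfl fun k _ => ?_
      rw [integral_mul_const, ← hSmean, mex_apply]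
    have h2 : ∫ ω, (B * S ω) i j ∂ν = (B * Hq) i j := by
      simp only [Matrix.mul_apply]
      rw [integral_finset_sum _ (fun k _ => (hSint k j).const_mul _)]
      refine Finset.sum_congr rfl fun k _ => ?_
      rw [integral_const_mul, ← hSmean, mex_apply]
    rw [integral_const, h1, h2]
    simp only [Matrix.sub_apply, Matrix.add_apply, Matrix.smul_apply, smul_eq_mul, mex_apply]
    simp
  · exact integrable_const _
  · exact (((hSB i j).add (hBS i j)).const_mul _)
  · exact ((integrable_const _).sub ((((hSB i j).add (hBS i j)).const_mul _)))
  · exact (hIntM B i j).const_mul _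

lemma step_loew [IsProbabilityMeasure ν] (γ : ℝ) (S : Ωs → Matrix (Fin d) (Fin d) ℝ)
    (Hq : Matrix (Fin d) (Fin d) ℝ) (hHqh : Hq.IsHermitian) (hSmean : mex ν S = Hq)
    (hSint : ∀ i j, Integrable (fun ω => S ω i j) ν)
    (hIntM : ∀ A : Matrix (Fin d) (Fin d) ℝ, ∀ i j : Fin d,
      Integrable (fun ω => (S ω * A * S ω) i j) ν)
    (αB : ℝ)
    (hfourth : ∀ A : Matrix (Fin d) (Fin d) ℝ, A.PosSemidef →
      loew (mex ν (fun ω => S ω * A * S ω)) ((αB * (Hq * A).trace) • Hq))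
    (B : Matrix (Fin d) (Fin d) ℝ) (hB : B.PosSemidef) :
    loew (mex ν (fun ω => ((1 : Matrix (Fin d) (Fin d) ℝ) - γ • S ω) * B *
        ((1 : Matrix (Fin d) (Fin d) ℝ) - γ • S ω)))
      (((1 : Matrix (Fin d) (Fin d) ℝ) - γ • Hq) * B * ((1 : Matrix (Fin d) (Fin d) ℝ) - γ • Hq)
        + (γ^2 * (αB * (Hq * B).trace)) • Hq) := by
  unfold loew
  have hkey : ((1 : Matrix (Fin d) (Fin d) ℝ) - γ • Hq) * B * ((1 : Matrix (Fin d) (Fin d) ℝ) - γ • Hq)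
        + (γ^2 * (αB * (Hq * B).trace)) • Hq
        - mex ν (fun ω => ((1 : Matrix (Fin d) (Fin d) ℝ) - γ • S ω) * B *
            ((1 : Matrix (Fin d) (Fin d) ℝ) - γ • S ω))
      = (γ^2) • (((αB * (Hq * B).trace) • Hq - mex ν (fun ω => S ω * B * S ω)) + Hq * B * Hq) := by
    rw [mex_conj_eq γ S Hq hSmean hSint hIntM B, expand_conj γ Hq B]
    module
  rw [hkey]
  refine psd_smul ?_ (sq_nonneg γ)
  refine Matrix.PosSemidef.add (hfourth B hB) ?_
  have := hB.conjTranspose_mul_mul_same Hq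
  rwa [show Hqᴴ = Hq from hHqh] at this


lemma sum_mulVec' {ι : Type*} (s : Finset ι) (M : ι → Matrix (Fin d) (Fin d) ℝ) (x : Fin d → ℝ) :
    (∑ i ∈ s, M i) *ᵥ x = ∑ i ∈ s, M i *ᵥ x := by
  ext k
  simp only [Matrix.mulVec, dotProduct, Finset.sum_apply, Finset.sum_mul]
  rw [Finset.sum_comm]
  exact Finset.sum_congr rfl fun i _ => by
    rw [Matrix.sum_apply, Finset.sum_mul]

lemma eigen_mulVec (Hq : Matrix (Fin d) (Fin d) ℝ) (lam : Fin d → ℝ) (v : Fin d → Fin d → ℝ)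
    (hortho : ∀ i j : Fin d, v i ⬝ᵥ v j = if i = j then (1 : ℝ) else 0)
    (hspec : Hq = ∑ i, lam i • vecMulVec (v i) (v i)) (j : Fin d) :
    Hq *ᵥ v j = lam j • v j := by
  rw [hspec, sum_mulVec']
  have h1 : ∀ i : Fin d, (lam i • vecMulVec (v i) (v i)) *ᵥ v j
      = (if i = j then (1:ℝ) else 0) • (lam i • v i) := by
    intro i
    rw [smul_mulVec, vecMulVec_mulVec', hortho i j, smul_comm]
  rw [Finset.sum_congr rfl fun i _ => h1 i]
  rw [show (fun i => (if i = j then (1:ℝ) else 0) • lam i • v i)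
      = fun i => if i = j then lam i • v i else 0 from funext fun i => by
    by_cases h : i = j <;> simp [h]]
  rw [Finset.sum_ite_eq' Finset.univ j (fun i => lam i • v i)]
  simp

lemma pow_mulVec (P : Matrix (Fin d) (Fin d) ℝ) (x : Fin d → ℝ) (p : ℝ)
    (h : P *ᵥ x = p • x) (m : ℕ) : (P ^ m) *ᵥ x = (p ^ m) • x := by
  induction m with
  | zero => simp
  | succ k ih =>
    rw [pow_succ, ← Matrix.mulVec_mulVec, h, Matrix.mulVec_smul, ih, smul_smul, pow_succ]
    ring_nf

lemma pow_mul_spec (P Hq : Matrix (Fin d) (Fin d) ℝ) (lam p : Fin d → ℝ) (v : Fin d → Fin d → ℝ)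
    (hspec : Hq = ∑ i, lam i • vecMulVec (v i) (v i))
    (hP : ∀ i, P *ᵥ v i = p i • v i) (m : ℕ) :
    P ^ m * Hq = ∑ i, (lam i * p i ^ m) • vecMulVec (v i) (v i) := by
  rw [hspec, Finset.mul_sum]
  refine Finset.sum_congr rfl fun i _ => ?_
  rw [Matrix.mul_smul, mul_vecMulVec, pow_mulVec P (v i) (p i) (hP i) m, vecMulVec_smul,
    smul_smul, mul_comm]

lemma trace_pow_mul (P Hq B : Matrix (Fin d) (Fin d) ℝ) (lam p : Fin d → ℝ)
    (v : Fin d → Fin d → ℝ)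
    (hspec : Hq = ∑ i, lam i • vecMulVec (v i) (v i))
    (hP : ∀ i, P *ᵥ v i = p i • v i) (m : ℕ) :
    ((P ^ m * Hq)ᵀ * B).trace = ∑ i, lam i * p i ^ m * (v i ⬝ᵥ (B *ᵥ v i)) := by
  rw [pow_mul_spec P Hq lam p v hspec hP m]
  rw [Matrix.transpose_sum]
  simp only [Matrix.transpose_smul, vecMulVec_transpose]
  rw [Finset.sum_mul, Matrix.trace_sum]
  refine Finset.sum_congr rfl fun i _ => ?_
  rw [Matrix.smul_mul, Matrix.trace_smul, trace_vecMulVec_mul]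
  simp [smul_eq_mul]


lemma split_arith (Nr g aB Ur W A V K : ℝ) (hN : Nr ≠ 0) (hg : g ≠ 0) :
    1/(Nr^2) * ((1/g^2) * W + Nr^2 * A + g^2 * aB * Ur * (K/g^2 + Nr^2 * V))
      = 1/(g^2 * Nr^2) * W + A + (aB * Ur / Nr) * (K/Nr + Nr * g^2 * V) := by
  field_simp

lemma ub_arith (aB A1 Nr A2 g c : ℝ) (hN : Nr ≠ 0) (hg : g ≠ 0) (hc : c ≠ 0) :
    aB * ((A1/g + Nr * A2)/c)/Nr = aB * (A1 + Nr * g * A2) / (Nr * g * c) := by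
  field_simp

lemma quad_conj (P B : Matrix (Fin d) (Fin d) ℝ) (hPt : Pᵀ = P) (x : Fin d → ℝ) (pp : ℝ)
    (hPx : P *ᵥ x = pp • x) :
    x ⬝ᵥ ((P * B * P) *ᵥ x) = pp^2 * (x ⬝ᵥ (B *ᵥ x)) := by
  have h1 : (P * B * P) *ᵥ x = pp • (P *ᵥ (B *ᵥ x)) := by
    rw [← Matrix.mulVec_mulVec, hPx, Matrix.mulVec_smul, Matrix.mulVec_mulVec]
  have h2 : x ⬝ᵥ (P *ᵥ (B *ᵥ x)) = pp * (x ⬝ᵥ (B *ᵥ x)) := by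
    rw [Matrix.dotProduct_mulVec, ← hPt, Matrix.vecMul_transpose, hPx, smul_dotProduct,
      smul_eq_mul]
  rw [h1, dotProduct_smul, smul_eq_mul, h2]
  ring

end Aux

set_option maxHeartbeats 2000000 in
theorem bias_bound
    (d N : ℕ) (hN : 0 < N)
    (γ : ℝ) (hγ : 0 < γ)
    -- the randomness of one quantized batch; S = (1/B) X^{qT} X^q
    (Ωs : Type) [MeasurableSpace Ωs] (ν : Measure Ωs) [IsProbabilityMeasure ν]
    (S : Ωs → Matrix (Fin d) (Fin d) ℝ)
    (hSpsd : ∀ ω, (S ω).PosSemidef)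
    (Hq : Matrix (Fin d) (Fin d) ℝ) (hHqpd : Hq.PosDef)
    (hSmean : mex ν S = Hq)
    -- γ is small enough that I − γH^q ⪰ 0
    (hcontr : ((1 : Matrix (Fin d) (Fin d) ℝ) - γ • Hq).PosSemidef)
    -- entrywise integrability of the operator integrands
    (hIntM : ∀ A : Matrix (Fin d) (Fin d) ℝ, ∀ i j : Fin d,
      Integrable (fun ω => (S ω * A * S ω) i j) ν)
    (hIntT : ∀ A : Matrix (Fin d) (Fin d) ℝ, ∀ i j : Fin d,
      Integrable (fun ω =>
        (((1 : Matrix (Fin d) (Fin d) ℝ) - γ • S ω) * A *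
          ((1 : Matrix (Fin d) (Fin d) ℝ) - γ • S ω)) i j) ν)
    -- fourth-moment assumption: M_B^q ∘ A ⪯ α_B tr(H^q A) H^q for PSD A
    (αB : ℝ) (hαB : 0 < αB)
    (hfourth : ∀ A : Matrix (Fin d) (Fin d) ℝ, A.PosSemidef →
      loew (mex ν (fun ω => S ω * A * S ω)) ((αB * (Hq * A).trace) • Hq))
    -- initial bias matrix
    (w0 wq : Fin d → ℝ)
    (B0 : Matrix (Fin d) (Fin d) ℝ)
    (hB0 : B0 = vecMulVec (w0 - wq) (w0 - wq))
    (Bseq : ℕ → Matrix (Fin d) (Fin d) ℝ)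
    (hBseq0 : Bseq 0 = B0)
    (hBseqStep : ∀ t : ℕ, Bseq (t + 1) =
      mex ν (fun ω => ((1 : Matrix (Fin d) (Fin d) ℝ) - γ • S ω) * Bseq t *
        ((1 : Matrix (Fin d) (Fin d) ℝ) - γ • S ω)))
    -- eigendecomposition of H^q and effective dimension k*
    (lam : Fin d → ℝ) (v : Fin d → Fin d → ℝ)
    (hlam : ∀ i j : Fin d, i ≤ j → lam j ≤ lam i)
    (hlampos : ∀ i, 0 < lam i)
    (hortho : ∀ i j : Fin d, v i ⬝ᵥ v j = if i = j then (1 : ℝ) else 0)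
    (hspec : Hq = ∑ i, lam i • vecMulVec (v i) (v i))
    (kstar : ℕ)
    (hkstar : ∀ i : Fin d, (i : ℕ) < kstar ↔ 1 / ((N : ℝ) * γ) ≤ lam i)
    (hstep : γ < 1 / (αB * Hq.trace)) :
    1 / ((N : ℝ) ^ 2) *
        ∑ t ∈ Finset.range N, ∑ k ∈ Finset.Ico t N,
          ((((1 : Matrix (Fin d) (Fin d) ℝ) - γ • Hq) ^ (k - t) * Hq)ᵀ * Bseq t).trace ≤
      2 * αB *
          ((∑ i ∈ Finset.univ.filter (fun i : Fin d => (i : ℕ) < kstar), ((w0 - wq) ⬝ᵥ v i) ^ 2) +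
            (N : ℝ) * γ * ∑ i ∈ Finset.univ.filter (fun i : Fin d => kstar ≤ (i : ℕ)), lam i * ((w0 - wq) ⬝ᵥ v i) ^ 2) /
          ((N : ℝ) * γ * (1 - γ * αB * Hq.trace)) *
        ((kstar : ℝ) / (N : ℝ) +
          (N : ℝ) * γ ^ 2 * ∑ i ∈ Finset.univ.filter (fun i : Fin d => kstar ≤ (i : ℕ)), lam i ^ 2) +
      1 / (γ ^ 2 * (N : ℝ) ^ 2) *
        ∑ i ∈ Finset.univ.filter (fun i : Fin d => (i : ℕ) < kstar), ((w0 - wq) ⬝ᵥ v i) ^ 2 / lam i +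
      ∑ i ∈ Finset.univ.filter (fun i : Fin d => kstar ≤ (i : ℕ)), lam i * ((w0 - wq) ⬝ᵥ v i) ^ 2 := by
  classical
  have hNpos : (0:ℝ) < N := Nat.cast_pos.mpr hN
  set u : Fin d → ℝ := w0 - wq with hu
  have hHqh : Hq.IsHermitian := hHqpd.isHermitian
  have hHqt : Hqᵀ = Hq := Aux.herm_transpose hHqh
  have hSint : ∀ i j : Fin d, Integrable (fun ω => S ω i j) ν :=
    Aux.S_entry_integrable γ hγ.ne' S hIntM hIntT
  set P : Matrix (Fin d) (Fin d) ℝ := (1 : Matrix (Fin d) (Fin d) ℝ) - γ • Hq with hPdef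
  have hPt : Pᵀ = P := by
    rw [hPdef, Matrix.transpose_sub, Matrix.transpose_one, Matrix.transpose_smul, hHqt]
  set p : Fin d → ℝ := fun i => 1 - γ * lam i with hpdef
  set bb : Fin d → ℝ := fun i => (u ⬝ᵥ v i) ^ 2 with hbdef
  set q : ℕ → Fin d → ℝ := fun t i => v i ⬝ᵥ (Bseq t *ᵥ v i) with hqdef
  set Ssc : ℕ → ℝ := fun t => (Hq * Bseq t).trace with hSscdef
  have hnorm : ∀ i, v i ⬝ᵥ v i = 1 := fun i => by simpa using hortho i i
  have heig : ∀ i, Hq *ᵥ v i = lam i • v i := Aux.eigen_mulVec Hq lam v hortho hspec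
  have hPv : ∀ i, P *ᵥ v i = p i • v i := by
    intro i
    rw [hPdef, Matrix.sub_mulVec, Matrix.one_mulVec, Matrix.smul_mulVec, heig i, smul_smul]
    ext k
    simp only [Pi.sub_apply, Pi.smul_apply, smul_eq_mul, hpdef]
    ring
  have hp0 : ∀ i, 0 ≤ p i := by
    intro i
    have h2 := hcontr.dotProduct_mulVec_nonneg (v i)
    rwa [star_trivial, hPv i, dotProduct_smul, smul_eq_mul, hnorm i, mul_one] at h2
  have hp1 : ∀ i, p i < 1 := by
    intro i
    have := mul_pos hγ (hlampos i)
    simp only [hpdef]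
    linarith
  have hglpos : ∀ i, 0 < γ * lam i := fun i => mul_pos hγ (hlampos i)
  have hBpsd : ∀ t, (Bseq t).PosSemidef := by
    intro t
    induction t with
    | zero =>
      rw [hBseq0, hB0]
      exact Aux.psd_vecMulVec u
    | succ t ih =>
      rw [hBseqStep t]
      refine Aux.mex_psd _ (fun ω => ?_) (fun i j => hIntT (Bseq t) i j)
      have hM : ((1 : Matrix (Fin d) (Fin d) ℝ) - γ • S ω)ᴴ
          = (1 : Matrix (Fin d) (Fin d) ℝ) - γ • S ω := by
        rw [Matrix.conjTranspose_sub, Matrix.conjTranspose_one, Matrix.conjTranspose_smul,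
          star_trivial, (hSpsd ω).1]
      have h2 := ih.conjTranspose_mul_mul_same ((1 : Matrix (Fin d) (Fin d) ℝ) - γ • S ω)
      rwa [hM] at h2
  have hqnn : ∀ t i, 0 ≤ q t i := by
    intro t i
    have h2 := (hBpsd t).dotProduct_mulVec_nonneg (v i)
    rw [star_trivial] at h2
    simpa only [hqdef] using h2
  have hq0 : ∀ i, q 0 i = bb i := by
    intro i
    simp only [hqdef, hbdef, hBseq0, hB0]
    rw [Aux.vecMulVec_mulVec', dotProduct_smul, smul_eq_mul, dotProduct_comm (v i) u]
    ring
  have htr : ∀ (B : Matrix (Fin d) (Fin d) ℝ) (m : ℕ),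
      ((P ^ m * Hq)ᵀ * B).trace = ∑ i, lam i * p i ^ m * (v i ⬝ᵥ (B *ᵥ v i)) :=
    fun B m => Aux.trace_pow_mul P Hq B lam p v hspec hPv m
  have hSval : ∀ t, Ssc t = ∑ i, lam i * q t i := by
    intro t
    have h := htr (Bseq t) 0
    rw [pow_zero, Matrix.one_mul, hHqt] at h
    simp only [hSscdef, hqdef]
    rw [h]
    exact Finset.sum_congr rfl fun i _ => by ring
  have hSnn : ∀ t, 0 ≤ Ssc t := by
    intro t
    rw [hSval t]
    exact Finset.sum_nonneg fun i _ => mul_nonneg (le_of_lt (hlampos i)) (hqnn t i)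
  have htrHq : Hq.trace = ∑ i, lam i := by
    rw [hspec, Matrix.trace_sum]
    refine Finset.sum_congr rfl fun i _ => ?_
    rw [Matrix.trace_smul, smul_eq_mul]
    have h2 : (vecMulVec (v i) (v i)).trace = v i ⬝ᵥ v i := by
      simp [Matrix.trace, Matrix.diag, vecMulVec_apply, dotProduct]
    rw [h2, hnorm i, mul_one]
  have htrnn : 0 ≤ Hq.trace := by
    rw [htrHq]; exact Finset.sum_nonneg fun i _ => le_of_lt (hlampos i)
  set c : ℝ := 1 - γ * αB * Hq.trace with hcdef
  have hc : 0 < c := by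
    rcases eq_or_lt_of_le htrnn with h0 | hpos
    · exfalso
      rw [← h0, mul_zero] at hstep
      simp only [div_zero] at hstep
      linarith
    · have hd : 0 < αB * Hq.trace := mul_pos hαB hpos
      rw [lt_div_iff₀ hd] at hstep
      simp only [hcdef]
      nlinarith
  have hqstep : ∀ t i, q (t+1) i ≤ p i ^ 2 * q t i + γ^2 * αB * Ssc t * lam i := by
    intro t i
    have hl := Aux.step_loew γ S Hq hHqh hSmean hSint hIntM αB hfourth (Bseq t) (hBpsd t)
    have h2 := Aux.loew_quad hl (v i)
    rw [← hBseqStep t, ← hPdef] at h2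
    have h3 : v i ⬝ᵥ ((P * Bseq t * P + (γ ^ 2 * (αB * (Hq * Bseq t).trace)) • Hq) *ᵥ v i)
        = p i ^ 2 * q t i + γ ^ 2 * αB * Ssc t * lam i := by
      rw [Matrix.add_mulVec, dotProduct_add,
        Aux.quad_conj P (Bseq t) hPt (v i) (p i) (hPv i),
        Matrix.smul_mulVec, heig i, dotProduct_smul, dotProduct_smul,
        smul_eq_mul, smul_eq_mul, hnorm i]
      simp only [hqdef, hSscdef]
      ring
    rw [h3] at h2
    simpa only [hqdef] using h2
  have hclosed : ∀ t i, q t i ≤ p i ^ (2*t) * bb i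
      + γ^2 * αB * lam i * ∑ s ∈ Finset.range t, Ssc s * p i ^ (2*(t-1-s)) := by
    intro t i
    induction t with
    | zero =>
      simp [hq0 i]
    | succ t ih =>
      have h1 := hqstep t i
      have h2 : p i ^ 2 * q t i ≤ p i ^ 2 * (p i ^ (2*t) * bb i
          + γ^2 * αB * lam i * ∑ s ∈ Finset.range t, Ssc s * p i ^ (2*(t-1-s))) :=
        mul_le_mul_of_nonneg_left ih (sq_nonneg _)
      have hX : p i ^ 2 * (∑ s ∈ Finset.range t, Ssc s * p i ^ (2*(t-1-s)))
          = ∑ s ∈ Finset.range t, Ssc s * p i ^ (2*(t-s)) := by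
        rw [Finset.mul_sum]
        refine Finset.sum_congr rfl fun s hs => ?_
        have he : 2*(t-1-s) + 2 = 2*(t-s) := by
          have := Finset.mem_range.mp hs; omega
        rw [← he, pow_add]
        ring
      have hpw : p i ^ 2 * p i ^ (2*t) = p i ^ (2*(t+1)) := by
        rw [← pow_add]
        congr 1
        omega
      rw [Finset.sum_range_succ]
      simp only [Nat.add_sub_cancel, Nat.sub_self, Nat.mul_zero, pow_zero, mul_one]
      calc q (t+1) i ≤ p i ^ 2 * q t i + γ^2 * αB * Ssc t * lam i := h1
        _ ≤ p i ^ 2 * (p i ^ (2*t) * bb i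
              + γ^2 * αB * lam i * ∑ s ∈ Finset.range t, Ssc s * p i ^ (2*(t-1-s)))
            + γ^2 * αB * Ssc t * lam i := by linarith
        _ = p i ^ (2*(t+1)) * bb i + γ^2 * αB * lam i *
              ((∑ s ∈ Finset.range t, Ssc s * p i ^ (2*(t-s))) + Ssc t) := by
            linear_combination (γ^2 * αB * lam i) * hX + bb i * hpw
  set C : Fin d → ℝ := fun i => if (i:ℕ) < kstar then 1/(γ * lam i) else (N:ℝ) with hCdef
  have hCnn : ∀ i, 0 ≤ C i := by
    intro i
    simp only [hCdef]
    split
    · exact le_of_lt (one_div_pos.mpr (hglpos i))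
    · exact Nat.cast_nonneg N
  have hgeo1 : ∀ i, ∀ K, K ≤ N → ∑ m ∈ Finset.range K, p i ^ m ≤ C i := by
    intro i K hK
    simp only [hCdef]
    split
    · have h2 := Aux.geom_le_inv (hp0 i) (hp1 i) K
      rwa [show (1:ℝ) - p i = γ * lam i from by simp only [hpdef]; ring] at h2
    · refine le_trans (Aux.geom_le_card (hp0 i) (le_of_lt (hp1 i)) K) ?_
      exact_mod_cast hK
  have hgeo2 : ∀ i (Ci : ℝ), (∀ K, K ≤ N → ∑ m ∈ Finset.range K, p i ^ m ≤ Ci) →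
      ∀ K, K ≤ N → ∑ m ∈ Finset.range K, p i ^ (2*m) ≤ Ci := by
    intro i Ci h K hK
    refine le_trans ?_ (h K hK)
    refine Finset.sum_le_sum fun m _ => ?_
    have h1 : p i ^ (2*m) = p i ^ m * p i ^ m := by rw [two_mul, pow_add]
    have h2 : p i ^ m ≤ 1 := pow_le_one₀ (hp0 i) (le_of_lt (hp1 i))
    have h3 : 0 ≤ p i ^ m := pow_nonneg (hp0 i) m
    nlinarith
  have hgeoinv : ∀ i, ∀ K, K ≤ N → ∑ m ∈ Finset.range K, p i ^ m ≤ 1/(γ * lam i) := by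
    intro i K _
    have h2 := Aux.geom_le_inv (hp0 i) (hp1 i) K
    rwa [show (1:ℝ) - p i = γ * lam i from by simp only [hpdef]; ring] at h2
  set U : ℝ := ∑ t ∈ Finset.range N, Ssc t with hUdef
  have hUnn : 0 ≤ U := Finset.sum_nonneg fun t _ => hSnn t
  have hdouble : ∀ i (Ci : ℝ), 0 ≤ Ci →
      (∀ K, K ≤ N → ∑ m ∈ Finset.range K, p i ^ (2*m) ≤ Ci) →
      ∑ t ∈ Finset.range N, ∑ s ∈ Finset.range t, Ssc s * p i ^ (2*(t-1-s)) ≤ U * Ci := by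
    intro i Ci hCinn hCi
    rw [Aux.tri_swap (fun s t => Ssc s * p i ^ (2*(t-1-s))) N]
    have hinner : ∀ s ∈ Finset.range N,
        ∑ t ∈ Finset.Ico (s+1) N, Ssc s * p i ^ (2*(t-1-s)) ≤ Ssc s * Ci := by
      intro s _
      rw [← Finset.mul_sum]
      refine mul_le_mul_of_nonneg_left ?_ (hSnn s)
      rw [Finset.sum_Ico_eq_sum_range]
      have hre : ∀ m ∈ Finset.range (N - (s+1)), p i ^ (2*((s+1+m)-1-s)) = p i ^ (2*m) := by
        intro m _
        congr 1
        omega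
      rw [Finset.sum_congr rfl hre]
      exact hCi (N - (s+1)) (Nat.sub_le _ _)
    calc ∑ s ∈ Finset.range N, ∑ t ∈ Finset.Ico (s+1) N, Ssc s * p i ^ (2*(t-1-s))
        ≤ ∑ s ∈ Finset.range N, Ssc s * Ci := Finset.sum_le_sum hinner
      _ = U * Ci := by rw [← Finset.sum_mul]
  have hbbnn : ∀ i, 0 ≤ bb i := by
    intro i; rw [hbdef]; exact sq_nonneg _
  have hqsumN : ∀ i (Ci : ℝ), 0 ≤ Ci →
      (∀ K, K ≤ N → ∑ m ∈ Finset.range K, p i ^ (2*m) ≤ Ci) →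
      ∑ t ∈ Finset.range N, q t i ≤ bb i * Ci + γ^2 * αB * lam i * (U * Ci) := by
    intro i Ci hCinn hCi
    have h1 : ∑ t ∈ Finset.range N, q t i
        ≤ ∑ t ∈ Finset.range N, (p i ^ (2*t) * bb i
            + γ^2 * αB * lam i * ∑ s ∈ Finset.range t, Ssc s * p i ^ (2*(t-1-s))) :=
      Finset.sum_le_sum fun t _ => hclosed t i
    rw [Finset.sum_add_distrib] at h1
    have h2 : ∑ t ∈ Finset.range N, p i ^ (2*t) * bb i ≤ bb i * Ci := by
      rw [← Finset.sum_mul, mul_comm]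
      exact mul_le_mul_of_nonneg_left (hCi N le_rfl) (hbbnn i)
    have h3 : ∑ t ∈ Finset.range N,
        (γ^2 * αB * lam i * ∑ s ∈ Finset.range t, Ssc s * p i ^ (2*(t-1-s)))
        ≤ γ^2 * αB * lam i * (U * Ci) := by
      rw [← Finset.mul_sum]
      refine mul_le_mul_of_nonneg_left (hdouble i Ci hCinn hCi) ?_
      exact mul_nonneg (mul_nonneg (sq_nonneg γ) hαB.le) (hlampos i).le
    linarith
  -- the head/tail split data
  have hCle : ∀ i, C i ≤ 1/(γ * lam i) := by
    intro i
    simp only [hCdef]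
    split
    · exact le_refl _
    · rename_i h
      have hlt : lam i < 1/((N:ℝ)*γ) := lt_of_not_ge (fun hle => h ((hkstar i).mpr hle))
      rw [le_div_iff₀ (hglpos i)]
      have h2 : lam i * ((N:ℝ)*γ) < 1 := (lt_div_iff₀ (by positivity)).mp hlt
      nlinarith
  have hUb : U * c ≤ (∑ i ∈ Finset.univ.filter (fun i : Fin d => (i : ℕ) < kstar), bb i)/γ
      + (N:ℝ) * ∑ i ∈ Finset.univ.filter (fun i : Fin d => kstar ≤ (i : ℕ)), lam i * bb i := by
    have hswap : U = ∑ i, lam i * ∑ t ∈ Finset.range N, q t i := by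
      rw [hUdef, Finset.sum_congr rfl fun t (_ : t ∈ Finset.range N) => hSval t,
        Finset.sum_comm]
      exact Finset.sum_congr rfl fun i _ => (Finset.mul_sum _ _ _).symm
    have hkey : ∀ i, lam i * (∑ t ∈ Finset.range N, q t i)
        ≤ lam i * ((u ⬝ᵥ v i)^2 * C i) + lam i * (γ * αB * U) := by
      intro i
      have h1 := hqsumN i (C i) (hCnn i) (hgeo2 i (C i) (hgeo1 i))
      have h2 : lam i * (∑ t ∈ Finset.range N, q t i)
          ≤ lam i * (bb i * C i + γ^2 * αB * lam i * (U * C i)) :=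
        mul_le_mul_of_nonneg_left h1 (hlampos i).le
      rw [mul_add] at h2
      have h3 : γ^2 * αB * lam i * (U * C i) ≤ γ^2 * αB * lam i * (U * (1/(γ * lam i))) := by
        refine mul_le_mul_of_nonneg_left (mul_le_mul_of_nonneg_left (hCle i) hUnn) ?_
        exact mul_nonneg (mul_nonneg (sq_nonneg γ) hαB.le) (hlampos i).le
      have h4 : γ^2 * αB * lam i * (U * (1/(γ * lam i))) = γ * αB * U := by
        field_simp [hγ.ne', (hlampos i).ne']
      have h5 : lam i * (γ^2 * αB * lam i * (U * C i)) ≤ lam i * (γ * αB * U) :=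
        mul_le_mul_of_nonneg_left (h4 ▸ h3) (hlampos i).le
      have h6 : bb i = (u ⬝ᵥ v i)^2 := by rw [hbdef]
      rw [h6] at h2
      linarith
    have hsum : U ≤ (∑ i, lam i * ((u ⬝ᵥ v i)^2 * C i)) + γ * αB * Hq.trace * U := by
      calc U = ∑ i, lam i * ∑ t ∈ Finset.range N, q t i := hswap
        _
          ≤ ∑ i, (lam i * ((u ⬝ᵥ v i)^2 * C i) + lam i * (γ * αB * U)) :=
            Finset.sum_le_sum fun i _ => hkey i
        _ = (∑ i, lam i * ((u ⬝ᵥ v i)^2 * C i)) + (∑ i, lam i) * (γ * αB * U) := by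
            rw [Finset.sum_add_distrib, ← Finset.sum_mul]
        _ = (∑ i, lam i * ((u ⬝ᵥ v i)^2 * C i)) + γ * αB * Hq.trace * U := by
            rw [← htrHq]
            ring
    have hfe : Finset.univ.filter (fun i : Fin d => ¬ (i:ℕ) < kstar)
        = Finset.univ.filter (fun i : Fin d => kstar ≤ (i:ℕ)) := by
      ext i
      simp [not_lt]
    have hhead : (∑ i, lam i * ((u ⬝ᵥ v i)^2 * C i))
        = (∑ i ∈ Finset.univ.filter (fun i : Fin d => (i : ℕ) < kstar), bb i)/γ
          + (N:ℝ) * ∑ i ∈ Finset.univ.filter (fun i : Fin d => kstar ≤ (i : ℕ)), lam i * bb i := by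
      rw [← Finset.sum_filter_add_sum_filter_not Finset.univ (fun i : Fin d => (i:ℕ) < kstar)
        (fun i => lam i * ((u ⬝ᵥ v i)^2 * C i)), hfe]
      congr 1
      · rw [Finset.sum_div]
        refine Finset.sum_congr rfl fun i hi => ?_
        have hmem := (Finset.mem_filter.mp hi).2
        simp only [hCdef, if_pos hmem, hbdef]
        have h0 : lam i ≠ 0 := (hlampos i).ne'
        field_simp
      · rw [Finset.mul_sum]
        refine Finset.sum_congr rfl fun i hi => ?_
        have hmem := (Finset.mem_filter.mp hi).2
        simp only [hCdef, if_neg (not_lt.mpr hmem), hbdef]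
        ring
    rw [hhead] at hsum
    have hexp : U * c = U - γ * αB * Hq.trace * U := by
      rw [hcdef]
      ring
    rw [hexp]
    linarith
  -- abbreviations matching the goal
  set A1 : ℝ := ∑ i ∈ Finset.univ.filter (fun i : Fin d => (i : ℕ) < kstar), (u ⬝ᵥ v i) ^ 2
    with hA1def
  set A2 : ℝ := ∑ i ∈ Finset.univ.filter (fun i : Fin d => kstar ≤ (i : ℕ)),
    lam i * (u ⬝ᵥ v i) ^ 2 with hA2def
  set V2 : ℝ := ∑ i ∈ Finset.univ.filter (fun i : Fin d => kstar ≤ (i : ℕ)), lam i ^ 2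
    with hV2def
  set W1 : ℝ := ∑ i ∈ Finset.univ.filter (fun i : Fin d => (i : ℕ) < kstar),
    (u ⬝ᵥ v i) ^ 2 / lam i with hW1def
  have hfe : Finset.univ.filter (fun i : Fin d => ¬ (i:ℕ) < kstar)
      = Finset.univ.filter (fun i : Fin d => kstar ≤ (i:ℕ)) := by
    ext i
    simp [not_lt]
  have hUbA : U * c ≤ A1 / γ + (N:ℝ) * A2 := by
    have h2 : (∑ i ∈ Finset.univ.filter (fun i : Fin d => (i : ℕ) < kstar), bb i) = A1 := by
      rw [hA1def]
    have h3 : (∑ i ∈ Finset.univ.filter (fun i : Fin d => kstar ≤ (i : ℕ)), lam i * bb i)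
        = A2 := by
      rw [hA2def]
    rw [← h2, ← h3]
    exact hUb
  -- per-time bound on the inner trace sum
  have key1 : ∀ t ∈ Finset.range N,
      ∑ k ∈ Finset.Ico t N, ((P ^ (k - t) * Hq)ᵀ * Bseq t).trace
        ≤ ∑ i, lam i * C i * q t i := by
    intro t _
    have hexp2 : ∀ k ∈ Finset.Ico t N, ((P ^ (k - t) * Hq)ᵀ * Bseq t).trace
        = ∑ i, lam i * p i ^ (k - t) * q t i := by
      intro k _
      rw [htr (Bseq t) (k - t)]
    rw [Finset.sum_congr rfl hexp2, Finset.sum_comm]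
    refine Finset.sum_le_sum fun i _ => ?_
    have hgeo : ∑ k ∈ Finset.Ico t N, p i ^ (k - t) ≤ C i := by
      rw [Finset.sum_Ico_eq_sum_range]
      have h2 : ∀ m ∈ Finset.range (N - t), p i ^ (t + m - t) = p i ^ m := by
        intro m _
        congr 1
        omega
      rw [Finset.sum_congr rfl h2]
      exact hgeo1 i (N - t) (Nat.sub_le _ _)
    calc ∑ k ∈ Finset.Ico t N, lam i * p i ^ (k - t) * q t i
        = lam i * q t i * ∑ k ∈ Finset.Ico t N, p i ^ (k - t) := by
          rw [Finset.mul_sum]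
          exact Finset.sum_congr rfl fun k _ => by ring
      _ ≤ lam i * q t i * C i :=
          mul_le_mul_of_nonneg_left hgeo (mul_nonneg (hlampos i).le (hqnn t i))
      _ = lam i * C i * q t i := by ring
  have key2 : ∑ t ∈ Finset.range N, ∑ i, lam i * C i * q t i
      ≤ (∑ i, lam i * C i ^ 2 * (u ⬝ᵥ v i) ^ 2) + γ^2 * αB * U * (∑ i, lam i ^ 2 * C i ^ 2) := by
    rw [Finset.sum_comm]
    have h1 : ∀ i, ∑ t ∈ Finset.range N, lam i * C i * q t i
        ≤ lam i * C i ^ 2 * (u ⬝ᵥ v i) ^ 2 + γ^2 * αB * U * (lam i ^ 2 * C i ^ 2) := by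
      intro i
      have hs := hqsumN i (C i) (hCnn i) (hgeo2 i (C i) (hgeo1 i))
      have h6 : bb i = (u ⬝ᵥ v i) ^ 2 := by rw [hbdef]
      calc ∑ t ∈ Finset.range N, lam i * C i * q t i
          = lam i * C i * ∑ t ∈ Finset.range N, q t i := (Finset.mul_sum _ _ _).symm
        _ ≤ lam i * C i * (bb i * C i + γ^2 * αB * lam i * (U * C i)) :=
            mul_le_mul_of_nonneg_left hs (mul_nonneg (hlampos i).le (hCnn i))
        _ = lam i * C i ^ 2 * (u ⬝ᵥ v i) ^ 2 + γ^2 * αB * U * (lam i ^ 2 * C i ^ 2) := by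
            rw [h6]
            ring
    calc ∑ i, ∑ t ∈ Finset.range N, lam i * C i * q t i
        ≤ ∑ i, (lam i * C i ^ 2 * (u ⬝ᵥ v i) ^ 2 + γ^2 * αB * U * (lam i ^ 2 * C i ^ 2)) :=
          Finset.sum_le_sum fun i _ => h1 i
      _ = (∑ i, lam i * C i ^ 2 * (u ⬝ᵥ v i) ^ 2)
            + γ^2 * αB * U * (∑ i, lam i ^ 2 * C i ^ 2) := by
          rw [Finset.sum_add_distrib, ← Finset.mul_sum]
  have hTa : (∑ i, lam i * C i ^ 2 * (u ⬝ᵥ v i) ^ 2) = (1/γ^2) * W1 + (N:ℝ)^2 * A2 := by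
    rw [← Finset.sum_filter_add_sum_filter_not Finset.univ (fun i : Fin d => (i:ℕ) < kstar)
      (fun i => lam i * C i ^ 2 * (u ⬝ᵥ v i) ^ 2), hfe]
    congr 1
    · rw [hW1def, Finset.mul_sum]
      refine Finset.sum_congr rfl fun i hi => ?_
      have hmem := (Finset.mem_filter.mp hi).2
      simp only [hCdef, if_pos hmem]
      have h0 : lam i ≠ 0 := (hlampos i).ne'
      field_simp
    · rw [hA2def, Finset.mul_sum]
      refine Finset.sum_congr rfl fun i hi => ?_
      have hmem := (Finset.mem_filter.mp hi).2
      simp only [hCdef, if_neg (not_lt.mpr hmem)]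
      ring
  have hcard : ((Finset.univ.filter (fun i : Fin d => (i:ℕ) < kstar)).card : ℝ) ≤ (kstar:ℝ) := by
    have h2 : (Finset.univ.filter (fun i : Fin d => (i:ℕ) < kstar)).card
        ≤ (Finset.range kstar).card := by
      refine Finset.card_le_card_of_injOn (fun i : Fin d => (i:ℕ))
        (fun i hi => Finset.mem_range.mpr (Finset.mem_filter.mp hi).2) ?_
      intro a _ b _ h
      exact Fin.val_injective h
    rw [Finset.card_range] at h2
    exact_mod_cast h2
  have hTb : (∑ i, lam i ^ 2 * C i ^ 2) ≤ (kstar:ℝ)/γ^2 + (N:ℝ)^2 * V2 := by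
    rw [← Finset.sum_filter_add_sum_filter_not Finset.univ (fun i : Fin d => (i:ℕ) < kstar)
      (fun i => lam i ^ 2 * C i ^ 2), hfe]
    have h1 : ∑ i ∈ Finset.univ.filter (fun i : Fin d => (i:ℕ) < kstar), lam i ^ 2 * C i ^ 2
        ≤ (kstar:ℝ)/γ^2 := by
      have he : ∀ i ∈ Finset.univ.filter (fun i : Fin d => (i:ℕ) < kstar),
          lam i ^ 2 * C i ^ 2 = 1/γ^2 := by
        intro i hi
        have hmem := (Finset.mem_filter.mp hi).2
        simp only [hCdef, if_pos hmem]
        have h0 : lam i ≠ 0 := (hlampos i).ne'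
        field_simp
      rw [Finset.sum_congr rfl he, Finset.sum_const, nsmul_eq_mul]
      have hγ2 : (0:ℝ) < γ^2 := by positivity
      calc ((Finset.univ.filter (fun i : Fin d => (i:ℕ) < kstar)).card : ℝ) * (1/γ^2)
          ≤ (kstar:ℝ) * (1/γ^2) :=
            mul_le_mul_of_nonneg_right hcard (le_of_lt (one_div_pos.mpr hγ2))
        _ = (kstar:ℝ)/γ^2 := by ring
    have h2 : ∑ i ∈ Finset.univ.filter (fun i : Fin d => kstar ≤ (i:ℕ)), lam i ^ 2 * C i ^ 2
        = (N:ℝ)^2 * V2 := by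
      rw [hV2def, Finset.mul_sum]
      refine Finset.sum_congr rfl fun i hi => ?_
      have hmem := (Finset.mem_filter.mp hi).2
      simp only [hCdef, if_neg (not_lt.mpr hmem)]
      ring
    rw [h2]
    linarith
  -- collect everything
  have hV2nn : 0 ≤ V2 := by
    rw [hV2def]
    exact Finset.sum_nonneg fun i _ => sq_nonneg _
  have hA1nn : 0 ≤ A1 := by
    rw [hA1def]
    exact Finset.sum_nonneg fun i _ => sq_nonneg _
  have hA2nn : 0 ≤ A2 := by
    rw [hA2def]
    exact Finset.sum_nonneg fun i _ => mul_nonneg (hlampos i).le (sq_nonneg _)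
  have hXnn : 0 ≤ (kstar:ℝ)/(N:ℝ) + (N:ℝ) * γ^2 * V2 := by
    have h1 : 0 ≤ (kstar:ℝ)/(N:ℝ) := div_nonneg (Nat.cast_nonneg _) hNpos.le
    have h2 : 0 ≤ (N:ℝ) * γ^2 * V2 :=
      mul_nonneg (mul_nonneg hNpos.le (sq_nonneg γ)) hV2nn
    linarith
  clear_value u P p bb q Ssc c C A1 A2 V2 W1 U
  have hbias1 : 1/((N:ℝ)^2) *
      ∑ t ∈ Finset.range N, ∑ k ∈ Finset.Ico t N, ((P ^ (k - t) * Hq)ᵀ * Bseq t).trace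
      ≤ 1/((N:ℝ)^2) * ((1/γ^2) * W1 + (N:ℝ)^2 * A2
          + γ^2 * αB * U * ((kstar:ℝ)/γ^2 + (N:ℝ)^2 * V2)) := by
    refine mul_le_mul_of_nonneg_left ?_ (by positivity)
    have hTbmul : γ^2 * αB * U * (∑ i, lam i ^ 2 * C i ^ 2)
        ≤ γ^2 * αB * U * ((kstar:ℝ)/γ^2 + (N:ℝ)^2 * V2) := by
      refine mul_le_mul_of_nonneg_left hTb ?_
      exact mul_nonneg (mul_nonneg (sq_nonneg γ) hαB.le) hUnn
    calc ∑ t ∈ Finset.range N, ∑ k ∈ Finset.Ico t N, ((P ^ (k - t) * Hq)ᵀ * Bseq t).trace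
        ≤ ∑ t ∈ Finset.range N, ∑ i, lam i * C i * q t i := Finset.sum_le_sum key1
      _ ≤ (∑ i, lam i * C i ^ 2 * (u ⬝ᵥ v i) ^ 2)
            + γ^2 * αB * U * (∑ i, lam i ^ 2 * C i ^ 2) := key2
      _ ≤ (1/γ^2) * W1 + (N:ℝ)^2 * A2 + γ^2 * αB * U * ((kstar:ℝ)/γ^2 + (N:ℝ)^2 * V2) := by
          rw [hTa] at *
          linarith
  have hsplit : 1/((N:ℝ)^2) * ((1/γ^2) * W1 + (N:ℝ)^2 * A2
        + γ^2 * αB * U * ((kstar:ℝ)/γ^2 + (N:ℝ)^2 * V2))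
      = 1/(γ^2 * (N:ℝ)^2) * W1 + A2
        + (αB * U / (N:ℝ)) * ((kstar:ℝ)/(N:ℝ) + (N:ℝ) * γ^2 * V2) :=
    Aux.split_arith (N:ℝ) γ αB U W1 A2 V2 (kstar:ℝ) hNpos.ne' hγ.ne'
  have hUb2 : αB * U / (N:ℝ) ≤ 2 * αB * (A1 + (N:ℝ) * γ * A2) / ((N:ℝ) * γ * c) := by
    have hU' : U ≤ (A1/γ + (N:ℝ) * A2)/c := (le_div_iff₀ hc).mpr hUbA
    have hstep1 : αB * U / (N:ℝ) ≤ αB * ((A1/γ + (N:ℝ) * A2)/c) / (N:ℝ) := by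
      gcongr
    have hstep2 : αB * ((A1/γ + (N:ℝ) * A2)/c) / (N:ℝ)
        = αB * (A1 + (N:ℝ) * γ * A2) / ((N:ℝ) * γ * c) :=
      Aux.ub_arith αB A1 (N:ℝ) A2 γ c hNpos.ne' hγ.ne' hc.ne'
    have hden : 0 < (N:ℝ) * γ * c := mul_pos (mul_pos hNpos hγ) hc
    have hnum : 0 ≤ αB * (A1 + (N:ℝ) * γ * A2) := by
      have : 0 ≤ (N:ℝ) * γ * A2 := mul_nonneg (mul_nonneg hNpos.le hγ.le) hA2nn
      exact mul_nonneg hαB.le (by linarith)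
    have hstep3 : αB * (A1 + (N:ℝ) * γ * A2) / ((N:ℝ) * γ * c)
        ≤ 2 * αB * (A1 + (N:ℝ) * γ * A2) / ((N:ℝ) * γ * c) := by
      rw [div_le_div_iff₀ hden hden]
      nlinarith
    calc αB * U / (N:ℝ) ≤ αB * ((A1/γ + (N:ℝ) * A2)/c) / (N:ℝ) := hstep1
      _ = αB * (A1 + (N:ℝ) * γ * A2) / ((N:ℝ) * γ * c) := hstep2
      _ ≤ 2 * αB * (A1 + (N:ℝ) * γ * A2) / ((N:ℝ) * γ * c) := hstep3
  have hlast : (αB * U / (N:ℝ)) * ((kstar:ℝ)/(N:ℝ) + (N:ℝ) * γ^2 * V2)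
      ≤ 2 * αB * (A1 + (N:ℝ) * γ * A2) / ((N:ℝ) * γ * c)
        * ((kstar:ℝ)/(N:ℝ) + (N:ℝ) * γ^2 * V2) :=
    mul_le_mul_of_nonneg_right hUb2 hXnn
  rw [hsplit] at hbias1
  linarith

end
end

section
/- (A bound for the variance.) If γ < 1/(α_B tr(H^q)), then variance := (1/N²) Σ_{t=0}^{N−1} Σ_{k=t}^{N−1} ⟨(I − γH^q)^{k−t} H^q, C_t⟩ satisfies variance ≤ [σ_G^{q,2} / (1 − γα_B tr(H^q))] · (k*/N + Nγ² Σ_{i>k*} (λ_i^q)²). -/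
open MeasureTheory Matrix Finset

noncomputable section

namespace VarAux

variable {Ω : Type*} [MeasurableSpace Ω] (ν : Measure Ω) {d : ℕ}

lemma mex_apply (f : Ω → Matrix (Fin d) (Fin d) ℝ) (i j : Fin d) :
    mex ν f i j = ∫ ω, f ω i j ∂ν := rfl

lemma dot_mex (f : Ω → Matrix (Fin d) (Fin d) ℝ)
    (hInt : ∀ i j, Integrable (fun ω => f ω i j) ν) (x : Fin d → ℝ) :
    x ⬝ᵥ (mex ν f) *ᵥ x = ∫ ω, x ⬝ᵥ (f ω) *ᵥ x ∂ν := by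
  have key : ∀ M : Matrix (Fin d) (Fin d) ℝ,
      x ⬝ᵥ M *ᵥ x = ∑ i, ∑ j, x i * (M i j * x j) := by
    intro M
    simp [dotProduct, mulVec, Finset.mul_sum]
  rw [key]
  simp only [key]
  rw [integral_finset_sum _ (fun i _ =>
    integrable_finset_sum _ (fun j _ => ((hInt i j).mul_const (x j)).const_mul (x i)))]
  refine Finset.sum_congr rfl fun i _ => ?_
  rw [integral_finset_sum _ (fun j _ => ((hInt i j).mul_const (x j)).const_mul (x i))]
  refine Finset.sum_congr rfl fun j _ => ?_
  rw [integral_const_mul, integral_mul_const]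
  rfl

lemma mex_posSemidef (f : Ω → Matrix (Fin d) (Fin d) ℝ)
    (hInt : ∀ i j, Integrable (fun ω => f ω i j) ν)
    (h : ∀ ω, (f ω).PosSemidef) : (mex ν f).PosSemidef := by
  refine Matrix.PosSemidef.of_dotProduct_mulVec_nonneg ?_ ?_
  · ext i j
    have e : ∀ ω, f ω j i = f ω i j := by
      intro ω
      conv_lhs => rw [← (h ω).1]
      simp [Matrix.conjTranspose_apply]
    simp only [Matrix.conjTranspose_apply, star_trivial]
    show (∫ ω, f ω j i ∂ν) = ∫ ω, f ω i j ∂ν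
    simp_rw [e]
  · intro x
    have hx : star x = x := by simp
    rw [hx, dot_mex ν f hInt x]
    refine integral_nonneg fun ω => ?_
    have := (h ω).dotProduct_mulVec_nonneg x
    simpa using this

lemma mul_vecMulVec (M : Matrix (Fin d) (Fin d) ℝ) (a b : Fin d → ℝ) :
    M * vecMulVec a b = vecMulVec (M *ᵥ a) b := by
  ext i j
  simp [Matrix.mul_apply, vecMulVec_apply, mulVec, dotProduct, Finset.sum_mul, mul_assoc]

lemma vecMulVec_smul_left (c : ℝ) (a b : Fin d → ℝ) :
    vecMulVec (c • a) b = c • vecMulVec a b := by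
  ext i j
  simp [vecMulVec_apply, mul_assoc]

lemma transpose_vecMulVec (a b : Fin d → ℝ) :
    (vecMulVec a b)ᵀ = vecMulVec b a := by
  ext i j
  simp [vecMulVec_apply, mul_comm]

lemma sum_mulVec' {ι : Type*} (s : Finset ι) (A : ι → Matrix (Fin d) (Fin d) ℝ)
    (x : Fin d → ℝ) : (∑ i ∈ s, A i) *ᵥ x = ∑ i ∈ s, A i *ᵥ x := by
  ext a
  simp only [mulVec, dotProduct, Matrix.sum_apply, Finset.sum_apply, Finset.sum_mul]
  rw [Finset.sum_comm]

lemma vecMulVec_mulVec' (a b x : Fin d → ℝ) :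
    (vecMulVec a b) *ᵥ x = (b ⬝ᵥ x) • a := by
  ext i
  simp only [mulVec, vecMulVec_apply, dotProduct, Pi.smul_apply, smul_eq_mul, Finset.sum_mul]
  exact Finset.sum_congr rfl fun j _ => by ring

lemma trace_vecMulVec_mul (a : Fin d → ℝ) (C : Matrix (Fin d) (Fin d) ℝ) :
    (vecMulVec a a * C).trace = a ⬝ᵥ C *ᵥ a := by
  simp only [Matrix.trace, Matrix.diag_apply, Matrix.mul_apply, vecMulVec_apply,
    mulVec, dotProduct, Finset.mul_sum]
  rw [Finset.sum_comm]
  refine Finset.sum_congr rfl fun i _ => Finset.sum_congr rfl fun j _ => by ring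

lemma one_sub_pow_le' {p : ℝ} (h0 : 0 ≤ p) (h1 : p ≤ 1) (n : ℕ) :
    1 - p ^ n ≤ n * (1 - p) := by
  have hg := geom_sum_mul p n
  have hsum : (∑ i ∈ Finset.range n, p ^ i) ≤ n := by
    calc (∑ i ∈ Finset.range n, p ^ i) ≤ ∑ i ∈ Finset.range n, 1 := by
          refine Finset.sum_le_sum fun i _ => pow_le_one₀ h0 h1
      _ = n := by simp
  nlinarith [mul_le_mul_of_nonneg_right hsum (by linarith : (0:ℝ) ≤ 1 - p)]

lemma geom_sum_le_one_div {p : ℝ} (h0 : 0 ≤ p) (h1 : p < 1) (n : ℕ) :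
    (∑ i ∈ Finset.range n, p ^ i) ≤ 1 / (1 - p) := by
  rw [le_div_iff₀ (by linarith)]
  have hg := geom_sum_mul p n
  nlinarith [pow_nonneg h0 n]

end VarAux

open VarAux

set_option maxHeartbeats 1600000

/-!
Statement 18 (a bound for the variance): if `γ < 1/(α_B tr(H^q))`, then the
variance term of quantized SGD is bounded as stated.
-/

theorem variance_bound
    (d N : ℕ) (hN : 0 < N)
    (γ : ℝ) (hγ : 0 < γ)
    -- the randomness of one quantized batch; S = (1/B) X^{qT} X^q
    (Ωs : Type) [MeasurableSpace Ωs] (ν : Measure Ωs) [IsProbabilityMeasure ν]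
    (S : Ωs → Matrix (Fin d) (Fin d) ℝ)
    (hSpsd : ∀ ω, (S ω).PosSemidef)
    (Hq : Matrix (Fin d) (Fin d) ℝ) (hHqpd : Hq.PosDef)
    (hSmean : mex ν S = Hq)
    -- γ is small enough that I − γH^q ⪰ 0
    (hcontr : ((1 : Matrix (Fin d) (Fin d) ℝ) - γ • Hq).PosSemidef)
    -- entrywise integrability of the operator integrands
    (hIntM : ∀ A : Matrix (Fin d) (Fin d) ℝ, ∀ i j : Fin d,
      Integrable (fun ω => (S ω * A * S ω) i j) ν)
    (hIntT : ∀ A : Matrix (Fin d) (Fin d) ℝ, ∀ i j : Fin d,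
      Integrable (fun ω =>
        (((1 : Matrix (Fin d) (Fin d) ℝ) - γ • S ω) * A *
          ((1 : Matrix (Fin d) (Fin d) ℝ) - γ • S ω)) i j) ν)
    -- fourth-moment assumption: M_B^q ∘ A ⪯ α_B tr(H^q A) H^q for PSD A
    (αB : ℝ) (hαB : 0 < αB)
    (hfourth : ∀ A : Matrix (Fin d) (Fin d) ℝ, A.PosSemidef →
      loew (mex ν (fun ω => S ω * A * S ω)) ((αB * (Hq * A).trace) • Hq))
    -- variance iterates: C_t = (I − γT_B^q) ∘ C_{t−1} + γ²σ_G^{q,2} H^q, C₀ = 0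
    (σG2 : ℝ) (hσG2 : 0 < σG2)
    (Cseq : ℕ → Matrix (Fin d) (Fin d) ℝ)
    (hCseq0 : Cseq 0 = 0)
    (hCseqStep : ∀ t : ℕ, Cseq (t + 1) =
      mex ν (fun ω => ((1 : Matrix (Fin d) (Fin d) ℝ) - γ • S ω) * Cseq t *
        ((1 : Matrix (Fin d) (Fin d) ℝ) - γ • S ω)) + (γ ^ 2 * σG2) • Hq)
    -- eigendecomposition of H^q and effective dimension k*
    (lam : Fin d → ℝ) (v : Fin d → Fin d → ℝ)
    (hlam : ∀ i j : Fin d, i ≤ j → lam j ≤ lam i)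
    (hlampos : ∀ i, 0 < lam i)
    (hortho : ∀ i j : Fin d, v i ⬝ᵥ v j = if i = j then (1 : ℝ) else 0)
    (hspec : Hq = ∑ i, lam i • vecMulVec (v i) (v i))
    (kstar : ℕ)
    (hkstar : ∀ i : Fin d, (i : ℕ) < kstar ↔ 1 / ((N : ℝ) * γ) ≤ lam i)
    (hstep : γ < 1 / (αB * Hq.trace)) :
    1 / ((N : ℝ) ^ 2) *
        ∑ t ∈ Finset.range N, ∑ k ∈ Finset.Ico t N,
          ((((1 : Matrix (Fin d) (Fin d) ℝ) - γ • Hq) ^ (k - t) * Hq)ᵀ * Cseq t).trace ≤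
      σG2 / (1 - γ * αB * Hq.trace) *
        ((kstar : ℝ) / (N : ℝ) +
          (N : ℝ) * γ ^ 2 * ∑ i ∈ Finset.univ.filter (fun i : Fin d => kstar ≤ (i : ℕ)), lam i ^ 2) := by
  -- basic setup
  set P : Matrix (Fin d) (Fin d) ℝ := 1 - γ • Hq with hPdef
  set pp : Fin d → ℝ := fun i => 1 - γ * lam i with hppdef
  -- eigen relations
  have hvv : ∀ i : Fin d, v i ⬝ᵥ v i = 1 := by
    intro i; rw [hortho i i]; simp
  have hHv : ∀ i : Fin d, Hq *ᵥ v i = lam i • v i := by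
    intro i
    rw [hspec, sum_mulVec']
    have e : ∀ j : Fin d, (lam j • vecMulVec (v j) (v j)) *ᵥ v i
        = if j = i then lam j • v j else 0 := by
      intro j
      rw [smul_mulVec, vecMulVec_mulVec', hortho]
      split <;> simp [smul_smul]
    simp_rw [e]
    simp
  have hHqT : Hqᵀ = Hq := by
    rw [hspec]
    simp [Matrix.transpose_sum, Matrix.transpose_smul, VarAux.transpose_vecMulVec]
  have hPv : ∀ i : Fin d, P *ᵥ v i = pp i • v i := by
    intro i
    rw [hPdef, sub_mulVec, one_mulVec, smul_mulVec, hHv, hppdef]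
    ext a
    simp only [Pi.sub_apply, Pi.smul_apply, smul_eq_mul]
    ring
  have hPmv : ∀ (m : ℕ) (i : Fin d), (P ^ m) *ᵥ v i = pp i ^ m • v i := by
    intro m i
    induction m with
    | zero => simp
    | succ m ih =>
      rw [pow_succ', ← Matrix.mulVec_mulVec, ih, Matrix.mulVec_smul, hPv, smul_smul, ← pow_succ]
  have hppnn : ∀ i, 0 ≤ pp i := by
    intro i
    have h2 := hcontr.dotProduct_mulVec_nonneg (v i)
    rw [show star (v i) = v i by simp, hPv i, dotProduct_smul, hvv i] at h2
    simpa using h2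
  have hpplt : ∀ i, pp i < 1 := by
    intro i
    have := hlampos i
    simp only [hppdef]
    nlinarith
  -- integrability of entries of S
  have hS_int : ∀ i j : Fin d, Integrable (fun ω => S ω i j) ν := by
    intro i j
    have h1 := hIntT 1 i j
    have h2 := hIntM 1 i j
    set B : Ωs → Matrix (Fin d) (Fin d) ℝ := fun ω => (1 : Matrix (Fin d) (Fin d) ℝ) - γ • S ω
      with hBdef
    set M2 : Ωs → Matrix (Fin d) (Fin d) ℝ := fun ω => S ω * (1 : Matrix (Fin d) (Fin d) ℝ) * S ω
      with hM2def
    have heq : (fun ω => S ω i j) = fun ω =>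
        ((1 : Matrix (Fin d) (Fin d) ℝ) i j + γ ^ 2 * M2 ω i j - (B ω * (1 : Matrix (Fin d) (Fin d) ℝ) * B ω) i j) / (2 * γ) := by
      funext ω
      have e1 : B ω * (1 : Matrix (Fin d) (Fin d) ℝ) * B ω
          = 1 - (2 * γ) • S ω + (γ ^ 2) • M2 ω := by
        rw [hBdef, hM2def]
        simp only [Matrix.mul_one]
        rw [sub_mul, one_mul, mul_sub, mul_one, smul_mul_assoc, mul_smul_comm, smul_smul]
        module
      rw [e1]
      simp only [Matrix.add_apply, Matrix.sub_apply, Matrix.smul_apply, smul_eq_mul]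
      field_simp
      ring
    rw [heq]
    exact (((integrable_const _).add (h2.const_mul _)).sub h1).div_const _
  have hSm : ∀ a b : Fin d, (∫ ω, S ω a b ∂ν) = Hq a b := by
    intro a b; rw [← hSmean]; rfl
  have hIntSA : ∀ (A : Matrix (Fin d) (Fin d) ℝ) (i j : Fin d),
      Integrable (fun ω => (S ω * A) i j) ν := by
    intro A i j
    simp only [Matrix.mul_apply]
    exact integrable_finset_sum _ fun k _ => (hS_int i k).mul_const _
  have hIntAS : ∀ (A : Matrix (Fin d) (Fin d) ℝ) (i j : Fin d),
      Integrable (fun ω => (A * S ω) i j) ν := by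
    intro A i j
    simp only [Matrix.mul_apply]
    exact integrable_finset_sum _ fun k _ => (hS_int k j).const_mul _
  have hmexSA : ∀ (A : Matrix (Fin d) (Fin d) ℝ) (i j : Fin d),
      (∫ ω, (S ω * A) i j ∂ν) = (Hq * A) i j := by
    intro A i j
    simp only [Matrix.mul_apply]
    rw [integral_finset_sum _ fun k _ => (hS_int i k).mul_const _]
    exact Finset.sum_congr rfl fun k _ => by rw [integral_mul_const, hSm]
  have hmexAS : ∀ (A : Matrix (Fin d) (Fin d) ℝ) (i j : Fin d),
      (∫ ω, (A * S ω) i j ∂ν) = (A * Hq) i j := by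
    intro A i j
    simp only [Matrix.mul_apply]
    rw [integral_finset_sum _ fun k _ => (hS_int k j).const_mul _]
    exact Finset.sum_congr rfl fun k _ => by rw [integral_const_mul, hSm]
  have hmexT : ∀ A : Matrix (Fin d) (Fin d) ℝ,
      mex ν (fun ω => ((1 : Matrix (Fin d) (Fin d) ℝ) - γ • S ω) * A *
          ((1 : Matrix (Fin d) (Fin d) ℝ) - γ • S ω))
        = A - γ • (Hq * A) - γ • (A * Hq) + γ ^ 2 • mex ν (fun ω => S ω * A * S ω) := by
    intro A
    ext i j
    have expand : ∀ ω : Ωs, (((1 : Matrix (Fin d) (Fin d) ℝ) - γ • S ω) * A *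
          ((1 : Matrix (Fin d) (Fin d) ℝ) - γ • S ω)) i j
        = A i j - γ * (S ω * A) i j - γ * (A * S ω) i j + γ ^ 2 * (S ω * A * S ω) i j := by
      intro ω
      have e1 : ((1 : Matrix (Fin d) (Fin d) ℝ) - γ • S ω) * A *
          ((1 : Matrix (Fin d) (Fin d) ℝ) - γ • S ω)
          = A - γ • (S ω * A) - γ • (A * S ω) + (γ ^ 2) • (S ω * A * S ω) := by
        have e2 : ((1 : Matrix (Fin d) (Fin d) ℝ) - γ • S ω) * A = A - γ • (S ω * A) := by
          rw [sub_mul, one_mul, smul_mul_assoc]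
        rw [e2, sub_mul, mul_sub, mul_one, mul_smul_comm, smul_mul_assoc, mul_sub, mul_one,
          mul_smul_comm, smul_sub, smul_smul]
        module
      rw [e1]
      simp only [Matrix.add_apply, Matrix.sub_apply, Matrix.smul_apply, smul_eq_mul]
    show (∫ ω, (((1 : Matrix (Fin d) (Fin d) ℝ) - γ • S ω) * A *
          ((1 : Matrix (Fin d) (Fin d) ℝ) - γ • S ω)) i j ∂ν) = _
    simp_rw [expand]
    have ia : Integrable (fun ω => A i j - γ * (S ω * A) i j) ν :=
      (integrable_const _).sub ((hIntSA A i j).const_mul γ)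
    have ib : Integrable (fun ω => A i j - γ * (S ω * A) i j - γ * (A * S ω) i j) ν :=
      ia.sub ((hIntAS A i j).const_mul γ)
    rw [integral_add ib ((hIntM A i j).const_mul _),
      integral_sub ia ((hIntAS A i j).const_mul γ),
      integral_sub (integrable_const _) ((hIntSA A i j).const_mul γ),
      integral_const, integral_const_mul, integral_const_mul, integral_const_mul,
      hmexSA, hmexAS]
    simp [Matrix.add_apply, Matrix.sub_apply, Matrix.smul_apply, smul_eq_mul, measure_univ,
      mex_apply]
  -- positive semidefiniteness of the iterates
  have hpsd : ∀ t : ℕ, (Cseq t).PosSemidef := by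
    intro t
    induction t with
    | zero => rw [hCseq0]; exact Matrix.PosSemidef.zero
    | succ t ih =>
      rw [hCseqStep t]
      refine Matrix.PosSemidef.add ?_ ?_
      · refine mex_posSemidef ν _ (hIntT (Cseq t)) fun ω => ?_
        have hsym : ((1 : Matrix (Fin d) (Fin d) ℝ) - γ • S ω)ᴴ
            = (1 : Matrix (Fin d) (Fin d) ℝ) - γ • S ω := by
          rw [Matrix.conjTranspose_sub, Matrix.conjTranspose_smul, Matrix.conjTranspose_one,
            (hSpsd ω).1]
          simp
        have h := ih.conjTranspose_mul_mul_same ((1 : Matrix (Fin d) (Fin d) ℝ) - γ • S ω)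
        rwa [hsym] at h
      · refine Matrix.PosSemidef.of_dotProduct_mulVec_nonneg ?_ ?_
        · show _ = _
          rw [Matrix.conjTranspose_smul, hHqpd.1.eq]
          simp
        · intro x
          rw [smul_mulVec, dotProduct_smul, smul_eq_mul]
          exact mul_nonneg (by positivity) (hHqpd.posSemidef.dotProduct_mulVec_nonneg x)
  have hqnn : ∀ (t : ℕ) (i : Fin d), 0 ≤ v i ⬝ᵥ (Cseq t) *ᵥ v i := by
    intro t i
    have h := (hpsd t).dotProduct_mulVec_nonneg (v i)
    rwa [show star (v i) = v i by simp] at h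
  -- trace identities
  have htrH : Hq.trace = ∑ i, lam i := by
    have e : ∀ i : Fin d, (vecMulVec (v i) (v i)).trace = 1 := by
      intro i
      rw [← Matrix.mul_one (vecMulVec (v i) (v i)), trace_vecMulVec_mul, one_mulVec, hvv]
    rw [hspec, Matrix.trace_sum]
    simp [Matrix.trace_smul, e, smul_eq_mul]
  have htrHC : ∀ C : Matrix (Fin d) (Fin d) ℝ,
      (Hq * C).trace = ∑ j, lam j * (v j ⬝ᵥ C *ᵥ v j) := by
    intro C
    rw [hspec, Finset.sum_mul, Matrix.trace_sum]
    refine Finset.sum_congr rfl fun j _ => ?_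
    rw [smul_mul_assoc, Matrix.trace_smul, trace_vecMulVec_mul, smul_eq_mul]
  -- constants
  have hAtr : 0 < αB * Hq.trace := by
    by_contra h
    push_neg at h
    have : 1 / (αB * Hq.trace) ≤ 0 := one_div_nonpos.mpr h
    linarith
  have hD : 0 < 1 - γ * αB * Hq.trace := by
    have h1 : γ * (αB * Hq.trace) < 1 := by
      have := (lt_div_iff₀ hAtr).mp hstep
      linarith
    nlinarith
  set c : ℝ := γ * σG2 / (1 - γ * αB * Hq.trace) with hcdef
  have hcpos : 0 < c := div_pos (mul_pos hγ hσG2) hD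
  have hcD : c * (1 - γ * αB * Hq.trace) = γ * σG2 := div_mul_cancel₀ _ (ne_of_gt hD)
  -- vecMul eigenrelation
  have hvH : ∀ i : Fin d, v i ᵥ* Hq = lam i • v i := by
    intro i
    rw [← Matrix.mulVec_transpose, hHqT, hHv]
  -- scalar step identity
  have hqstep : ∀ (t : ℕ) (i : Fin d),
      v i ⬝ᵥ (Cseq (t + 1)) *ᵥ v i
        = v i ⬝ᵥ (Cseq t) *ᵥ v i - 2 * (γ * lam i) * (v i ⬝ᵥ (Cseq t) *ᵥ v i)
          + γ ^ 2 * (v i ⬝ᵥ (mex ν fun ω => S ω * Cseq t * S ω) *ᵥ v i)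
          + γ ^ 2 * σG2 * lam i := by
    intro t i
    rw [hCseqStep t, hmexT (Cseq t)]
    have h1 : v i ⬝ᵥ (Hq * Cseq t) *ᵥ v i = lam i * (v i ⬝ᵥ Cseq t *ᵥ v i) := by
      rw [← Matrix.mulVec_mulVec, dotProduct_mulVec, hvH, smul_dotProduct, smul_eq_mul]
    have h2 : v i ⬝ᵥ (Cseq t * Hq) *ᵥ v i = lam i * (v i ⬝ᵥ Cseq t *ᵥ v i) := by
      rw [← Matrix.mulVec_mulVec, hHv, Matrix.mulVec_smul, dotProduct_smul, smul_eq_mul]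
    have h3 : v i ⬝ᵥ ((γ ^ 2 * σG2) • Hq) *ᵥ v i = γ ^ 2 * σG2 * lam i := by
      rw [smul_mulVec, dotProduct_smul, hHv, dotProduct_smul, hvv]
      simp only [smul_eq_mul, mul_one]
    rw [add_mulVec, dotProduct_add, add_mulVec, dotProduct_add, sub_mulVec, dotProduct_sub,
      sub_mulVec, dotProduct_sub, h3]
    rw [smul_mulVec γ, dotProduct_smul, h1, smul_mulVec γ, dotProduct_smul, h2,
      smul_mulVec (γ ^ 2), dotProduct_smul]
    simp only [smul_eq_mul]
    ring
  -- key induction: quadratic forms of C_t are bounded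
  have hqb : ∀ (t : ℕ) (i : Fin d), v i ⬝ᵥ (Cseq t) *ᵥ v i ≤ c * (1 - pp i ^ (2 * t)) := by
    intro t
    induction t with
    | zero =>
      intro i
      rw [hCseq0]
      simp
    | succ t ih =>
      intro i
      -- fourth moment bound at v i
      have hm : v i ⬝ᵥ (mex ν fun ω => S ω * Cseq t * S ω) *ᵥ v i
          ≤ αB * (c * Hq.trace) * lam i := by
        have h4 := (hfourth (Cseq t) (hpsd t)).dotProduct_mulVec_nonneg (v i)
        rw [show star (v i) = v i by simp, sub_mulVec, dotProduct_sub, smul_mulVec,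
          dotProduct_smul, hHv, dotProduct_smul, hvv] at h4
        simp only [smul_eq_mul, mul_one] at h4
        have h5 : (Hq * Cseq t).trace ≤ c * Hq.trace := by
          rw [htrHC, htrH, Finset.mul_sum]
          refine Finset.sum_le_sum fun j _ => ?_
          have hb := ih j
          have hp2t : 0 ≤ pp j ^ (2 * t) := pow_nonneg (hppnn j) _
          have : v j ⬝ᵥ Cseq t *ᵥ v j ≤ c := by nlinarith
          nlinarith [hlampos j, hqnn t j]
        nlinarith [mul_le_mul_of_nonneg_left h5 (mul_nonneg hαB.le (hlampos i).le)]
      have e := hqstep t i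
      have hih := ih i
      have hq0 := hqnn t i
      have hp0 := hppnn i
      have hp1 := (hpplt i).le
      have hr0 : (0:ℝ) ≤ pp i ^ (2 * t) := pow_nonneg hp0 _
      have hr1 : pp i ^ (2 * t) ≤ 1 := pow_le_one₀ hp0 hp1
      have h2t : pp i ^ (2 * (t + 1)) = pp i ^ (2 * t) * pp i ^ 2 := by
        rw [← pow_add]
        ring_nf
      have hgl0 : 0 < γ * lam i := mul_pos hγ (hlampos i)
      have hgl1 : γ * lam i ≤ 1 := by
        have := hppnn i
        simp only [hppdef] at this
        linarith
      have hppe : pp i = 1 - γ * lam i := rfl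
      have hkey : γ ^ 2 * (αB * (c * Hq.trace) * lam i) + γ ^ 2 * σG2 * lam i
          = c * (γ * lam i) := by
        linear_combination (-(γ * lam i)) * hcD
      have hqp : (v i ⬝ᵥ Cseq t *ᵥ v i) * pp i ^ 2
          = (v i ⬝ᵥ Cseq t *ᵥ v i) - 2 * (v i ⬝ᵥ Cseq t *ᵥ v i) * (γ * lam i)
            + (v i ⬝ᵥ Cseq t *ᵥ v i) * (γ * lam i) ^ 2 := by
        rw [hppe]; ring
      have hcp : c * pp i ^ 2 = c - 2 * c * (γ * lam i) + c * (γ * lam i) ^ 2 := by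
        rw [hppe]; ring
      rw [e, h2t]
      -- q' = q - 2γλ q + γ² m + γ²σ²λ ≤ c (1 - r p²)
      have s1 : γ ^ 2 * (v i ⬝ᵥ (mex ν fun ω => S ω * Cseq t * S ω) *ᵥ v i)
          ≤ γ ^ 2 * (αB * (c * Hq.trace) * lam i) :=
        mul_le_mul_of_nonneg_left hm (sq_nonneg γ)
      have s3 : (v i ⬝ᵥ Cseq t *ᵥ v i) * pp i ^ 2 ≤ (c * (1 - pp i ^ (2 * t))) * pp i ^ 2 :=
        mul_le_mul_of_nonneg_right hih (sq_nonneg (pp i))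
      have sD : 0 ≤ c * (γ * lam i) - c * (γ * lam i) ^ 2 := by
        nlinarith [mul_nonneg (mul_nonneg hcpos.le hgl0.le)
          (by linarith : (0:ℝ) ≤ 1 - γ * lam i)]
      have s5 : (c * (1 - pp i ^ (2 * t))) * pp i ^ 2 + c * (γ * lam i)
          ≤ c * (1 - pp i ^ (2 * t) * pp i ^ 2) := by
        have e5 : (c * (1 - pp i ^ (2 * t))) * pp i ^ 2
            = c * pp i ^ 2 - c * (pp i ^ (2 * t) * pp i ^ 2) := by ring
        rw [e5, hcp]
        linarith
      have s6 : 0 ≤ (v i ⬝ᵥ Cseq t *ᵥ v i) * (γ * lam i) ^ 2 :=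
        mul_nonneg hq0 (sq_nonneg (γ * lam i))
      linarith [hqp, hkey]
  have hppe' : ∀ i : Fin d, pp i = 1 - γ * lam i := fun i => by simp only [hppdef]
  -- spectral trace formula
  have htr2 : ∀ (m : ℕ) (C : Matrix (Fin d) (Fin d) ℝ),
      ((P ^ m * Hq)ᵀ * C).trace = ∑ i, lam i * pp i ^ m * (v i ⬝ᵥ C *ᵥ v i) := by
    intro m C
    have hPmH : P ^ m * Hq = ∑ i, (lam i * pp i ^ m) • vecMulVec (v i) (v i) := by
      rw [hspec, Finset.mul_sum]
      refine Finset.sum_congr rfl fun i _ => ?_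
      rw [mul_smul_comm, VarAux.mul_vecMulVec, hPmv, VarAux.vecMulVec_smul_left, smul_smul, mul_comm]
    rw [hPmH, Matrix.transpose_sum]
    simp_rw [Matrix.transpose_smul, VarAux.transpose_vecMulVec]
    rw [Finset.sum_mul, Matrix.trace_sum]
    simp_rw [smul_mul_assoc, Matrix.trace_smul, trace_vecMulVec_mul, smul_eq_mul]
  -- monotone bound on the double sum
  have hmono : (∑ t ∈ Finset.range N, ∑ k ∈ Finset.Ico t N, ((P ^ (k - t) * Hq)ᵀ * Cseq t).trace)
      ≤ ∑ i : Fin d, ∑ t ∈ Finset.range N, ∑ k ∈ Finset.Ico t N,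
          lam i * pp i ^ (k - t) * (c * (1 - pp i ^ (2 * t))) := by
    calc (∑ t ∈ Finset.range N, ∑ k ∈ Finset.Ico t N, ((P ^ (k - t) * Hq)ᵀ * Cseq t).trace)
        = ∑ t ∈ Finset.range N, ∑ k ∈ Finset.Ico t N, ∑ i : Fin d,
            lam i * pp i ^ (k - t) * (v i ⬝ᵥ Cseq t *ᵥ v i) :=
          Finset.sum_congr rfl fun t _ => Finset.sum_congr rfl fun k _ => htr2 _ _
      _ = ∑ t ∈ Finset.range N, ∑ i : Fin d, ∑ k ∈ Finset.Ico t N,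
            lam i * pp i ^ (k - t) * (v i ⬝ᵥ Cseq t *ᵥ v i) :=
          Finset.sum_congr rfl fun t _ => Finset.sum_comm
      _ = ∑ i : Fin d, ∑ t ∈ Finset.range N, ∑ k ∈ Finset.Ico t N,
            lam i * pp i ^ (k - t) * (v i ⬝ᵥ Cseq t *ᵥ v i) := Finset.sum_comm
      _ ≤ ∑ i : Fin d, ∑ t ∈ Finset.range N, ∑ k ∈ Finset.Ico t N,
            lam i * pp i ^ (k - t) * (c * (1 - pp i ^ (2 * t))) := by
          refine Finset.sum_le_sum fun i _ => Finset.sum_le_sum fun t _ =>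
            Finset.sum_le_sum fun k _ => ?_
          exact mul_le_mul_of_nonneg_left (hqb t i)
            (mul_nonneg (hlampos i).le (pow_nonneg (hppnn i) _))
  -- head bound
  have hhead : ∀ i : Fin d, (∑ t ∈ Finset.range N, ∑ k ∈ Finset.Ico t N,
      lam i * pp i ^ (k - t) * (c * (1 - pp i ^ (2 * t)))) ≤ (N : ℝ) * (c / γ) := by
    intro i
    have hinner : ∀ t : ℕ, (∑ k ∈ Finset.Ico t N,
        lam i * pp i ^ (k - t) * (c * (1 - pp i ^ (2 * t)))) ≤ c / γ := by
      intro t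
      have e1 : (∑ k ∈ Finset.Ico t N, lam i * pp i ^ (k - t) * (c * (1 - pp i ^ (2 * t))))
          = (lam i * (c * (1 - pp i ^ (2 * t)))) * ∑ k ∈ Finset.Ico t N, pp i ^ (k - t) := by
        rw [Finset.mul_sum]
        exact Finset.sum_congr rfl fun k _ => by ring
      have e2 : (∑ k ∈ Finset.Ico t N, pp i ^ (k - t))
          = ∑ j ∈ Finset.range (N - t), pp i ^ j := by
        rw [Finset.sum_Ico_eq_sum_range]
        exact Finset.sum_congr rfl fun j _ => by rw [Nat.add_sub_cancel_left]
      have hgeo : (∑ j ∈ Finset.range (N - t), pp i ^ j) ≤ 1 / (γ * lam i) := by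
        have h := geom_sum_le_one_div (hppnn i) (hpplt i) (N - t)
        have hd : 1 - pp i = γ * lam i := by rw [hppe']; ring
        rwa [hd] at h
      have hsum_nonneg : 0 ≤ ∑ j ∈ Finset.range (N - t), pp i ^ j :=
        Finset.sum_nonneg fun j _ => pow_nonneg (hppnn i) _
      have hp2t : 0 ≤ pp i ^ (2 * t) := pow_nonneg (hppnn i) _
      have hb2 : lam i * (c * (1 - pp i ^ (2 * t))) ≤ lam i * c := by
        refine mul_le_mul_of_nonneg_left ?_ (hlampos i).le
        nlinarith
      rw [e1, e2]
      calc (lam i * (c * (1 - pp i ^ (2 * t)))) * (∑ j ∈ Finset.range (N - t), pp i ^ j)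
          ≤ (lam i * c) * (1 / (γ * lam i)) :=
            mul_le_mul hb2 hgeo hsum_nonneg (mul_nonneg (hlampos i).le hcpos.le)
        _ = c / γ := by
            rw [mul_one_div, div_eq_div_iff (mul_pos hγ (hlampos i)).ne' hγ.ne']
            ring
    calc (∑ t ∈ Finset.range N, ∑ k ∈ Finset.Ico t N,
        lam i * pp i ^ (k - t) * (c * (1 - pp i ^ (2 * t))))
        ≤ ∑ t ∈ Finset.range N, (c / γ) := Finset.sum_le_sum fun t _ => hinner t
      _ = (N : ℝ) * (c / γ) := by
          rw [Finset.sum_const, Finset.card_range, nsmul_eq_mul]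
  -- tail bound
  have htail : ∀ i : Fin d, (∑ t ∈ Finset.range N, ∑ k ∈ Finset.Ico t N,
      lam i * pp i ^ (k - t) * (c * (1 - pp i ^ (2 * t))))
      ≤ lam i ^ 2 * (c * γ * (N : ℝ) ^ 3) := by
    intro i
    have hterm : ∀ t k : ℕ, lam i * pp i ^ (k - t) * (c * (1 - pp i ^ (2 * t)))
        ≤ c * γ * lam i ^ 2 * (2 * (t : ℝ)) := by
      intro t k
      have h1 : pp i ^ (k - t) ≤ 1 := pow_le_one₀ (hppnn i) (hpplt i).le
      have h1' : 0 ≤ pp i ^ (k - t) := pow_nonneg (hppnn i) _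
      have h2 : 1 - pp i ^ (2 * t) ≤ (2 * (t : ℝ)) * (γ * lam i) := by
        have h := one_sub_pow_le' (hppnn i) (hpplt i).le (2 * t)
        have hd : 1 - pp i = γ * lam i := by rw [hppe']; ring
        rw [hd] at h
        push_cast at h
        linarith
      have h3 : 0 ≤ 1 - pp i ^ (2 * t) := by
        have := pow_le_one₀ (hppnn i) (hpplt i).le (n := 2 * t)
        linarith
      calc lam i * pp i ^ (k - t) * (c * (1 - pp i ^ (2 * t)))
          ≤ lam i * 1 * (c * ((2 * (t : ℝ)) * (γ * lam i))) := by
            refine mul_le_mul (mul_le_mul_of_nonneg_left h1 (hlampos i).le)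
              (mul_le_mul_of_nonneg_left h2 hcpos.le) (mul_nonneg hcpos.le h3) ?_
            exact mul_nonneg (hlampos i).le zero_le_one
        _ = c * γ * lam i ^ 2 * (2 * (t : ℝ)) := by ring
    have hgauss : (∑ t ∈ Finset.range N, (t : ℝ)) ≤ (N : ℝ) ^ 2 / 2 := by
      have h := Finset.sum_range_id_mul_two N
      have h' : ((∑ t ∈ Finset.range N, t : ℕ) : ℝ) * 2 = (N : ℝ) * ((N - 1 : ℕ) : ℝ) := by
        exact_mod_cast congrArg (Nat.cast : ℕ → ℝ) h
      rw [Nat.cast_sum] at h'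
      have h'' : ((N - 1 : ℕ) : ℝ) ≤ (N : ℝ) := by exact_mod_cast Nat.sub_le N 1
      nlinarith [Nat.cast_nonneg (α := ℝ) N]
    calc (∑ t ∈ Finset.range N, ∑ k ∈ Finset.Ico t N,
        lam i * pp i ^ (k - t) * (c * (1 - pp i ^ (2 * t))))
        ≤ ∑ t ∈ Finset.range N, (N : ℝ) * (c * γ * lam i ^ 2 * (2 * (t : ℝ))) := by
          refine Finset.sum_le_sum fun t _ => ?_
          calc (∑ k ∈ Finset.Ico t N, lam i * pp i ^ (k - t) * (c * (1 - pp i ^ (2 * t))))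
              ≤ ∑ k ∈ Finset.Ico t N, c * γ * lam i ^ 2 * (2 * (t : ℝ)) :=
                Finset.sum_le_sum fun k _ => hterm t k
            _ = ((N - t : ℕ) : ℝ) * (c * γ * lam i ^ 2 * (2 * (t : ℝ))) := by
                rw [Finset.sum_const, Nat.card_Ico, nsmul_eq_mul]
            _ ≤ (N : ℝ) * (c * γ * lam i ^ 2 * (2 * (t : ℝ))) := by
                refine mul_le_mul_of_nonneg_right ?_ ?_
                · exact_mod_cast Nat.sub_le N t
                · positivity
      _ = 2 * c * γ * lam i ^ 2 * (N : ℝ) * (∑ t ∈ Finset.range N, (t : ℝ)) := by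
          rw [Finset.mul_sum]
          exact Finset.sum_congr rfl fun t _ => by ring
      _ ≤ lam i ^ 2 * (c * γ * (N : ℝ) ^ 3) := by
          have hfac : (0:ℝ) ≤ 2 * c * γ * lam i ^ 2 * (N : ℝ) := by positivity
          nlinarith [mul_le_mul_of_nonneg_left hgauss hfac]
  -- split head and tail
  have hcard : ((Finset.univ.filter (fun i : Fin d => ¬ kstar ≤ (i : ℕ))).card : ℝ)
      ≤ (kstar : ℝ) := by
    have h := Finset.card_le_card_of_injOn
      (s := Finset.univ.filter (fun i : Fin d => ¬ kstar ≤ (i : ℕ)))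
      (t := Finset.range kstar) (fun i : Fin d => (i : ℕ))
      (fun i hi => Finset.mem_range.mpr (by
        have h2 := (Finset.mem_filter.mp hi).2
        simp only [not_le] at h2
        exact h2))
      (fun a _ b _ hab => Fin.val_injective hab)
    rw [Finset.card_range] at h
    exact_mod_cast h
  have hsplit : (∑ i : Fin d, ∑ t ∈ Finset.range N, ∑ k ∈ Finset.Ico t N,
        lam i * pp i ^ (k - t) * (c * (1 - pp i ^ (2 * t))))
      ≤ (∑ i ∈ Finset.univ.filter (fun i : Fin d => kstar ≤ (i : ℕ)), lam i ^ 2)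
          * (c * γ * (N : ℝ) ^ 3)
        + (kstar : ℝ) * ((N : ℝ) * (c / γ)) := by
    rw [← Finset.sum_filter_add_sum_filter_not Finset.univ (fun i : Fin d => kstar ≤ (i : ℕ))]
    refine add_le_add ?_ ?_
    · rw [Finset.sum_mul]
      exact Finset.sum_le_sum fun i _ => htail i
    · calc (∑ i ∈ Finset.univ.filter (fun i : Fin d => ¬ kstar ≤ (i : ℕ)),
          ∑ t ∈ Finset.range N, ∑ k ∈ Finset.Ico t N,
            lam i * pp i ^ (k - t) * (c * (1 - pp i ^ (2 * t))))
          ≤ ∑ i ∈ Finset.univ.filter (fun i : Fin d => ¬ kstar ≤ (i : ℕ)),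
              (N : ℝ) * (c / γ) := Finset.sum_le_sum fun i _ => hhead i
        _ = ((Finset.univ.filter (fun i : Fin d => ¬ kstar ≤ (i : ℕ))).card : ℝ)
              * ((N : ℝ) * (c / γ)) := by rw [Finset.sum_const, nsmul_eq_mul]
        _ ≤ (kstar : ℝ) * ((N : ℝ) * (c / γ)) := by
            refine mul_le_mul_of_nonneg_right hcard ?_
            positivity
  -- final assembly
  have hN0 : (0:ℝ) < (N : ℝ) := by exact_mod_cast hN
  have hfinal : 1 / ((N : ℝ) ^ 2) *
      ((∑ i ∈ Finset.univ.filter (fun i : Fin d => kstar ≤ (i : ℕ)), lam i ^ 2)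
          * (c * γ * (N : ℝ) ^ 3)
        + (kstar : ℝ) * ((N : ℝ) * (c / γ)))
      = σG2 / (1 - γ * αB * Hq.trace) *
        ((kstar : ℝ) / (N : ℝ) +
          (N : ℝ) * γ ^ 2 *
            ∑ i ∈ Finset.univ.filter (fun i : Fin d => kstar ≤ (i : ℕ)), lam i ^ 2) := by
    rw [hcdef]
    field_simp
    ring
  calc 1 / ((N : ℝ) ^ 2) *
      ∑ t ∈ Finset.range N, ∑ k ∈ Finset.Ico t N, ((P ^ (k - t) * Hq)ᵀ * Cseq t).trace
      ≤ 1 / ((N : ℝ) ^ 2) *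
        ((∑ i ∈ Finset.univ.filter (fun i : Fin d => kstar ≤ (i : ℕ)), lam i ^ 2)
            * (c * γ * (N : ℝ) ^ 3)
          + (kstar : ℝ) * ((N : ℝ) * (c / γ))) := by
        refine mul_le_mul_of_nonneg_left (le_trans hmono hsplit) ?_
        positivity
    _ = _ := hfinal


end
end
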